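/- arXiv:1910.09391 — 3 statements merged into one kernel-verified Lean document; each statement's English description precedes it below -/
import Mathlib

section
/- Fix an integer p ≥ 2, f ∈ 𝓕, and a sequence (κ_n) of nonzero real numbers with κ_n → 0. Then, as n → ∞, log( c_{p,κ_n,f} / c_p ) = −κ_n/p − (3 κ_n² / (2 p (p+2))) f''(0) + κ_n²/(2p²) + o(κ_n²). -/
open MeasureTheory Filter Real Asymptotics
open scoped ENNReal NNReal Topology

noncomputable section

/-- The normalizing constant `c_p = 1 / ∫_{-1}^1 (1-s²)^{(p-3)/2} ds`. -/
def c0 (p : ℕ) : ℝ := 1 / ∫ s in (-1:ℝ)..1, (1 - s ^ 2) ^ (((p : ℝ) - 3) / 2)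

/-- The normalizing constant `c_{p,κ,f} = 1 / ∫_{-1}^1 (1-s²)^{(p-3)/2} f(κ s²) ds`. -/
def cKF (p : ℕ) (κ : ℝ) (f : ℝ → ℝ) : ℝ :=
  1 / ∫ s in (-1:ℝ)..1, (1 - s ^ 2) ^ (((p : ℝ) - 3) / 2) * f (κ * s ^ 2)

namespace Stmt13Aux

/-- The weight function. -/
def W (p : ℕ) (s : ℝ) : ℝ := (1 - s ^ 2) ^ (((p : ℝ) - 3) / 2)

lemma ha {p : ℕ} (hp : 2 ≤ p) : (-1 : ℝ) < ((p : ℝ) - 3) / 2 := by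
  have : (2 : ℝ) ≤ (p : ℝ) := by exact_mod_cast hp
  linarith

lemma W_meas (p : ℕ) : Measurable (W p) :=
  (measurable_const.sub (measurable_id.pow_const 2)).pow measurable_const

lemma W_nonneg (p : ℕ) {s : ℝ} (hs : s ∈ Set.Icc (-1 : ℝ) 1) : 0 ≤ W p s :=
  Real.rpow_nonneg (by nlinarith [hs.1, hs.2]) _

lemma W_pos (p : ℕ) {s : ℝ} (hs : s ∈ Set.Ioo (-1 : ℝ) 1) : 0 < W p s :=
  Real.rpow_pos_of_pos (by nlinarith [hs.1, hs.2]) _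

lemma W_intable {p : ℕ} (hp : 2 ≤ p) : IntervalIntegrable (W p) volume (-1) 1 := by
  set a : ℝ := ((p : ℝ) - 3) / 2 with ha_def
  have ha' : (-1 : ℝ) < a := ha hp
  set M : ℝ := max ((2 : ℝ) ^ a) 1 with hM_def
  have hM0 : 0 ≤ M := le_trans zero_le_one (le_max_right _ _)
  have h01 : IntervalIntegrable (fun x : ℝ => x ^ a) volume 0 1 :=
    intervalIntegral.intervalIntegrable_rpow' ha'
  have hbase : ∀ s : ℝ, 0 ≤ 1 - s → 0 ≤ 1 + s → W p s ≤ M * ((1 - s) ^ a * (1 + s) ^ a) := by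
    intro s h1 h2
    have : (1 : ℝ) - s ^ 2 = (1 - s) * (1 + s) := by ring
    rw [W, this, Real.mul_rpow h1 h2]
    nlinarith [Real.rpow_nonneg h1 a, Real.rpow_nonneg h2 a,
      mul_nonneg (Real.rpow_nonneg h1 a) (Real.rpow_nonneg h2 a), le_max_right ((2:ℝ)^a) 1]
  -- bound for the factor (1+s)^a on [0,1] and (1-s)^a on [-1,0]
  have hfac : ∀ x : ℝ, 1 ≤ x → x ≤ 2 → x ^ a ≤ M := by
    intro x h1 h2
    rcases le_or_gt 0 a with h | h
    · exact le_trans (Real.rpow_le_rpow (by linarith) h2 h) (le_max_left _ _)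
    · exact le_trans (Real.rpow_le_one_of_one_le_of_nonpos h1 h.le) (le_max_right _ _)
  have hRight : IntervalIntegrable (W p) volume 0 1 := by
    have hsub : IntervalIntegrable (fun s : ℝ => (1 - s) ^ a) volume 0 1 :=
      (h01.comp_sub_left 1).symm.mono_set (by norm_num)
    refine IntervalIntegrable.mono_fun' (g := fun s => M * M * (1 - s) ^ a)
      (hsub.const_mul (M * M)) ((W_meas p).aestronglyMeasurable) ?_
    rw [Set.uIoc_of_le (by norm_num : (0:ℝ) ≤ 1)]
    refine (ae_restrict_iff' measurableSet_Ioc).mpr (ae_of_all _ ?_)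
    intro s hs
    have h1 : 0 ≤ 1 - s := by linarith [hs.2]
    have h2 : 0 ≤ 1 + s := by linarith [hs.1]
    have hb := hbase s h1 h2
    have hW : 0 ≤ W p s := W_nonneg p ⟨by linarith [hs.1], hs.2⟩
    show ‖W p s‖ ≤ M * M * (1 - s) ^ a
    rw [Real.norm_eq_abs, abs_of_nonneg hW]
    calc W p s ≤ M * ((1 - s) ^ a * (1 + s) ^ a) := hb
      _ ≤ M * ((1 - s) ^ a * M) := by
          have h3 := hfac (1 + s) (by linarith [hs.1]) (by linarith [hs.2])
          exact mul_le_mul_of_nonneg_left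
            (mul_le_mul_of_nonneg_left h3 (Real.rpow_nonneg h1 a)) hM0
      _ = M * M * (1 - s) ^ a := by ring
  have hLeft : IntervalIntegrable (W p) volume (-1) 0 := by
    have hsub : IntervalIntegrable (fun s : ℝ => (1 + s) ^ a) volume (-1) 0 := by
      have h2 := h01.comp_add_right 1
      simp only [zero_sub, sub_self] at h2
      simpa [add_comm] using h2
    refine IntervalIntegrable.mono_fun' (g := fun s => M * M * (1 + s) ^ a)
      (hsub.const_mul (M * M)) ((W_meas p).aestronglyMeasurable) ?_
    rw [Set.uIoc_of_le (by norm_num : (-1:ℝ) ≤ 0)]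
    refine (ae_restrict_iff' measurableSet_Ioc).mpr (ae_of_all _ ?_)
    intro s hs
    have h1 : 0 ≤ 1 - s := by linarith [hs.2]
    have h2 : 0 ≤ 1 + s := by linarith [hs.1]
    have hb := hbase s h1 h2
    have hW : 0 ≤ W p s := W_nonneg p ⟨le_of_lt hs.1, by linarith [hs.2]⟩
    show ‖W p s‖ ≤ M * M * (1 + s) ^ a
    rw [Real.norm_eq_abs, abs_of_nonneg hW]
    calc W p s ≤ M * ((1 - s) ^ a * (1 + s) ^ a) := hb
      _ ≤ M * (M * (1 + s) ^ a) := by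
          have h3 := hfac (1 - s) (by linarith [hs.2]) (by linarith [hs.1])
          exact mul_le_mul_of_nonneg_left
            (mul_le_mul_of_nonneg_right h3 (Real.rpow_nonneg h2 a)) hM0
      _ = M * M * (1 + s) ^ a := by ring
  exact hLeft.trans hRight

lemma W_intable_mul {p : ℕ} (hp : 2 ≤ p) {g : ℝ → ℝ} (hg : Continuous g) :
    IntervalIntegrable (fun s => g s * W p s) volume (-1) 1 :=
  (W_intable hp).continuousOn_mul hg.continuousOn

lemma hq_pos {p : ℕ} (hp : 2 ≤ p) : 0 < ((p : ℝ) - 1) / 2 := by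
  have : (2 : ℝ) ≤ (p : ℝ) := by exact_mod_cast hp
  linarith

/-- The key integration-by-parts identity. -/
lemma key_FTC {p : ℕ} (hp : 2 ≤ p) (k : ℕ) :
    ∫ s in (-1 : ℝ)..1, (((k : ℝ) + 1) * s ^ k - ((k : ℝ) + p) * s ^ (k + 2)) * W p s = 0 := by
  set q : ℝ := ((p : ℝ) - 1) / 2 with hq_def
  have hq : 0 < q := hq_pos hp
  set F : ℝ → ℝ := fun s => s ^ (k + 1) * (1 - s ^ 2) ^ q with hF_def
  have hcont : ContinuousOn F (Set.Icc (-1 : ℝ) 1) := by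
    apply Continuous.continuousOn
    exact (continuous_pow (k + 1)).mul
      ((continuous_const.sub (continuous_pow 2)).rpow_const (fun x => Or.inr hq.le))
  have hderiv : ∀ x ∈ Set.Ioo (-1 : ℝ) 1, HasDerivAt F
      ((((k : ℝ) + 1) * x ^ k - ((k : ℝ) + p) * x ^ (k + 2)) * W p x) x := by
    intro x hx
    have hne : (1 : ℝ) - x ^ 2 ≠ 0 := by nlinarith [hx.1, hx.2]
    have hposb : (0 : ℝ) < 1 - x ^ 2 := by nlinarith [hx.1, hx.2]
    have h1 : HasDerivAt (fun s : ℝ => 1 - s ^ 2) (-(2 * x ^ 1)) x :=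
      (hasDerivAt_pow 2 x).const_sub 1
    have h2 : HasDerivAt (fun s : ℝ => (1 - s ^ 2) ^ q)
        (-(2 * x ^ 1) * q * (1 - x ^ 2) ^ (q - 1)) x := by
      have := h1.rpow_const (p := q) (Or.inl hne)
      simpa using this
    have h3 : HasDerivAt F _ x := (hasDerivAt_pow (k + 1) x).mul h2
    convert h3 using 1
    have e1 : (1 - x ^ 2) ^ (q - 1) = (1 - x ^ 2) ^ (((p : ℝ) - 3) / 2) := by
      norm_num [hq_def]
      ring_nf
    have e2 : (1 - x ^ 2) ^ q = (1 - x ^ 2) ^ (((p : ℝ) - 3) / 2) * (1 - x ^ 2) := by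
      rw [show q = ((p : ℝ) - 3) / 2 + 1 by rw [hq_def]; ring, Real.rpow_add_one hne]
    rw [W, e1, e2]
    push_cast
    ring
  have hint : IntervalIntegrable
      (fun s => (((k : ℝ) + 1) * s ^ k - ((k : ℝ) + p) * s ^ (k + 2)) * W p s) volume (-1) 1 :=
    W_intable_mul hp (by continuity)
  have := intervalIntegral.integral_eq_sub_of_hasDerivAt_of_le (by norm_num) hcont hderiv hint
  rw [this]
  have hF1 : F 1 = 0 := by
    simp [hF_def, Real.zero_rpow hq.ne']
  have hFm1 : F (-1) = 0 := by
    simp [hF_def, Real.zero_rpow hq.ne']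
  rw [hF1, hFm1, sub_zero]

lemma J2_intable {p : ℕ} (hp : 2 ≤ p) :
    IntervalIntegrable (fun s => s ^ 2 * W p s) volume (-1) 1 :=
  W_intable_mul hp (by continuity)

lemma J4_intable {p : ℕ} (hp : 2 ≤ p) :
    IntervalIntegrable (fun s => s ^ 4 * W p s) volume (-1) 1 :=
  W_intable_mul hp (by continuity)

lemma J0_pos {p : ℕ} (hp : 2 ≤ p) : 0 < ∫ s in (-1 : ℝ)..1, W p s :=
  intervalIntegral.intervalIntegral_pos_of_pos_on (W_intable hp)
    (fun x hx => W_pos p hx) (by norm_num)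

lemma moment2 {p : ℕ} (hp : 2 ≤ p) :
    (p : ℝ) * ∫ s in (-1 : ℝ)..1, s ^ 2 * W p s = ∫ s in (-1 : ℝ)..1, W p s := by
  have h := key_FTC hp 0
  have hrw : (fun s : ℝ => (((0 : ℕ) : ℝ) + 1) * s ^ 0 - (((0 : ℕ) : ℝ) + p) * s ^ (0 + 2))
      = fun s : ℝ => 1 - (p : ℝ) * s ^ 2 := by
    funext s; push_cast; ring
  rw [show (fun s : ℝ => ((((0 : ℕ) : ℝ) + 1) * s ^ 0 - (((0 : ℕ) : ℝ) + p) * s ^ (0 + 2)) * W p s)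
      = fun s : ℝ => W p s - (p : ℝ) * (s ^ 2 * W p s) by funext s; push_cast; ring] at h
  rw [intervalIntegral.integral_sub (W_intable hp) ((J2_intable hp).const_mul _),
    intervalIntegral.integral_const_mul] at h
  linarith

lemma moment4 {p : ℕ} (hp : 2 ≤ p) :
    ((p : ℝ) + 2) * ∫ s in (-1 : ℝ)..1, s ^ 4 * W p s
      = 3 * ∫ s in (-1 : ℝ)..1, s ^ 2 * W p s := by
  have h := key_FTC hp 2
  rw [show (fun s : ℝ => ((((2 : ℕ) : ℝ) + 1) * s ^ 2 - (((2 : ℕ) : ℝ) + p) * s ^ (2 + 2)) * W p s)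
      = fun s : ℝ => 3 * (s ^ 2 * W p s) - ((p : ℝ) + 2) * (s ^ 4 * W p s) by
        funext s; push_cast; ring] at h
  rw [intervalIntegral.integral_sub ((J2_intable hp).const_mul _) ((J4_intable hp).const_mul _),
    intervalIntegral.integral_const_mul, intervalIntegral.integral_const_mul] at h
  linarith

section G
variable {p : ℕ} {f : ℝ → ℝ}

lemma G_intable (hp : 2 ≤ p) (hf_pos : ∀ x, 0 < f x) (hf_mono : Monotone f) (t : ℝ) :
    IntervalIntegrable (fun s => W p s * f (t * s ^ 2)) volume (-1) 1 := by
  refine IntervalIntegrable.mono_fun' (g := fun s => f |t| * W p s)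
    ((W_intable hp).const_mul _) ?_ ?_
  · exact ((W_meas p).mul (hf_mono.measurable.comp
      ((measurable_id.pow_const 2).const_mul t))).aestronglyMeasurable
  · rw [Set.uIoc_of_le (by norm_num : (-1 : ℝ) ≤ 1)]
    refine (ae_restrict_iff' measurableSet_Ioc).mpr (ae_of_all _ ?_)
    intro s hs
    have hs2 : s ^ 2 ≤ 1 := by nlinarith [hs.1, hs.2]
    have hW : 0 ≤ W p s := W_nonneg p ⟨le_of_lt hs.1, hs.2⟩
    have harg : t * s ^ 2 ≤ |t| := by
      calc t * s ^ 2 ≤ |t| * s ^ 2 := mul_le_mul_of_nonneg_right (le_abs_self t) (sq_nonneg s)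
        _ ≤ |t| * 1 := mul_le_mul_of_nonneg_left hs2 (abs_nonneg t)
        _ = |t| := mul_one _
    show ‖W p s * f (t * s ^ 2)‖ ≤ f |t| * W p s
    rw [Real.norm_eq_abs, abs_of_nonneg (mul_nonneg hW (hf_pos _).le)]
    calc W p s * f (t * s ^ 2) ≤ W p s * f |t| :=
          mul_le_mul_of_nonneg_left (hf_mono harg) hW
      _ = f |t| * W p s := mul_comm _ _

lemma G_pos (hp : 2 ≤ p) (hf_pos : ∀ x, 0 < f x) (hf_mono : Monotone f) (t : ℝ) :
    0 < ∫ s in (-1 : ℝ)..1, W p s * f (t * s ^ 2) :=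
  intervalIntegral.intervalIntegral_pos_of_pos_on (G_intable hp hf_pos hf_mono t)
    (fun x hx => mul_pos (W_pos p hx) (hf_pos _)) (by norm_num)

end G

/-- Second-order Taylor expansion of `f` at `0`, via l'Hôpital. -/
lemma taylor_littleO {f : ℝ → ℝ}
    (hf_diff : ∀ᶠ x in 𝓝 (0 : ℝ), DifferentiableAt ℝ f x)
    (hf_diff2 : DifferentiableAt ℝ (deriv f) 0)
    (hf0 : f 0 = 1) (hf'0 : deriv f 0 = 1) :
    (fun x => f x - 1 - x - deriv (deriv f) 0 / 2 * x ^ 2) =o[𝓝[≠] (0 : ℝ)]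
      fun x => x ^ 2 := by
  set c : ℝ := deriv (deriv f) 0 with hc_def
  set num : ℝ → ℝ := fun x => f x - 1 - x - c / 2 * x ^ 2 with hnum_def
  have hdiff' : ∀ᶠ x in 𝓝[≠] (0 : ℝ), DifferentiableAt ℝ f x :=
    hf_diff.filter_mono nhdsWithin_le_nhds
  have hne : ∀ᶠ x in 𝓝[≠] (0 : ℝ), x ≠ 0 := self_mem_nhdsWithin
  have hnum_deriv : ∀ x : ℝ, DifferentiableAt ℝ f x →
      deriv num x = deriv f x - 1 - c * x := by
    intro x hx
    have h1 : HasDerivAt num (deriv f x - 1 - c * x) x := by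
      have h2 : HasDerivAt (fun y : ℝ => c / 2 * y ^ 2) (c / 2 * (2 * x ^ 1)) x :=
        (hasDerivAt_pow 2 x).const_mul (c / 2)
      have h3 : HasDerivAt num _ x := ((hx.hasDerivAt.sub_const 1).sub (hasDerivAt_id x)).sub h2
      convert h3 using 1
      ring
    exact h1.deriv
  have htendsto : Tendsto (fun x => num x / x ^ 2) (𝓝[≠] (0 : ℝ)) (𝓝 0) := by
    apply deriv.lhopital_zero_nhdsNE
    · exact hdiff'.mono fun x hx => by
        exact ((hx.sub_const 1).sub differentiableAt_id).sub
          ((differentiableAt_pow 2).const_mul _)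
    · exact hne.mono fun x hx => by
        rw [deriv_pow_field]
        simpa using hx
    · have hcont : ContinuousAt num 0 := by
        have : DifferentiableAt ℝ f 0 := hf_diff.self_of_nhds
        exact ((this.continuousAt.sub continuousAt_const).sub continuousAt_id).sub
          (continuousAt_const.mul (continuousAt_pow 0 2))
      have h0 : num 0 = 0 := by simp [hnum_def, hf0]
      have := hcont.tendsto
      rw [h0] at this
      exact this.mono_left nhdsWithin_le_nhds
    · have : Tendsto (fun x : ℝ => x ^ 2) (𝓝 (0 : ℝ)) (𝓝 0) := by
        simpa using (continuous_pow 2).tendsto (0 : ℝ)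
      exact this.mono_left nhdsWithin_le_nhds
    · -- ratio of derivatives
      have hslope : Tendsto (fun x : ℝ => (deriv f x - deriv f 0) / (x - 0))
          (𝓝[≠] (0 : ℝ)) (𝓝 c) := by
        have h := hasDerivAt_iff_tendsto_slope.mp hf_diff2.hasDerivAt
        rw [← hc_def] at h
        refine h.congr' ?_
        filter_upwards with x
        simp [slope, vsub_eq_sub, div_eq_inv_mul]
      have hmain : Tendsto (fun x : ℝ => 1 / 2 * ((deriv f x - deriv f 0) / (x - 0) - c))
          (𝓝[≠] (0 : ℝ)) (𝓝 0) := by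
        have := (hslope.sub_const c).const_mul (1 / 2 : ℝ)
        simpa using this
      refine hmain.congr' ?_
      filter_upwards [hdiff', hne] with x hx hx0
      rw [hnum_deriv x hx, deriv_pow_field, hf'0]
      push_cast
      field_simp
      ring
  rw [Asymptotics.isLittleO_iff_tendsto']
  · exact htendsto
  · filter_upwards [hne] with x hx0 h
    exact absurd h (pow_ne_zero 2 hx0)

lemma G_expansion {p : ℕ} (hp : 2 ≤ p) {f : ℝ → ℝ}
    (hf_pos : ∀ x, 0 < f x) (hf_mono : Monotone f)
    (hf_diff : ∀ᶠ x in 𝓝 (0 : ℝ), DifferentiableAt ℝ f x)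
    (hf_diff2 : DifferentiableAt ℝ (deriv f) 0)
    (hf0 : f 0 = 1) (hf'0 : deriv f 0 = 1) :
    (fun t => (∫ s in (-1 : ℝ)..1, W p s * f (t * s ^ 2))
        - ((∫ s in (-1 : ℝ)..1, W p s) + t * (∫ s in (-1 : ℝ)..1, s ^ 2 * W p s)
            + deriv (deriv f) 0 / 2 * t ^ 2 * (∫ s in (-1 : ℝ)..1, s ^ 4 * W p s)))
      =o[𝓝[≠] (0 : ℝ)] fun t => t ^ 2 := by
  set c : ℝ := deriv (deriv f) 0 with hc_def
  set J0 : ℝ := ∫ s in (-1 : ℝ)..1, W p s with hJ0_def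
  have hJ0 : 0 < J0 := J0_pos hp
  have hr := taylor_littleO hf_diff hf_diff2 hf0 hf'0
  rw [← hc_def] at hr
  rw [Asymptotics.isLittleO_iff] at hr ⊢
  intro ε hε
  set ε' : ℝ := ε / J0 with hε'_def
  have hε' : 0 < ε' := div_pos hε hJ0
  obtain ⟨δ, hδpos, hδ⟩ : ∃ δ > 0, ∀ x : ℝ, |x| < δ →
      |f x - 1 - x - c / 2 * x ^ 2| ≤ ε' * x ^ 2 := by
    have h2 := hr hε'
    rw [eventually_nhdsWithin_iff, Metric.eventually_nhds_iff] at h2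
    obtain ⟨δ, hδpos, h⟩ := h2
    refine ⟨δ, hδpos, fun x hxδ => ?_⟩
    rcases eq_or_ne x 0 with rfl | hx0
    · simp [hf0]
    · have := h (show dist x 0 < δ by simpa [Real.dist_eq] using hxδ) hx0
      simpa [Real.norm_eq_abs, abs_of_nonneg (sq_nonneg x)] using this
  have hev : ∀ᶠ t in 𝓝[≠] (0 : ℝ), |t| < δ :=
    Filter.Eventually.filter_mono nhdsWithin_le_nhds
      (by simpa using eventually_abs_sub_lt (0 : ℝ) hδpos)
  filter_upwards [hev] with t ht
  -- rewrite the difference as a single integral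
  have e : (fun s : ℝ => W p s * (f (t * s ^ 2) - 1 - t * s ^ 2 - c / 2 * (t * s ^ 2) ^ 2))
      = fun s : ℝ => W p s * f (t * s ^ 2)
        - (W p s + t * (s ^ 2 * W p s) + c / 2 * t ^ 2 * (s ^ 4 * W p s)) := by
    funext s; ring
  have hInt : IntervalIntegrable
      (fun s : ℝ => W p s * (f (t * s ^ 2) - 1 - t * s ^ 2 - c / 2 * (t * s ^ 2) ^ 2))
      volume (-1) 1 := by
    rw [e]
    exact (G_intable hp hf_pos hf_mono t).sub
      (((W_intable hp).add ((J2_intable hp).const_mul t)).add ((J4_intable hp).const_mul _))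
  have heq : (∫ s in (-1 : ℝ)..1, W p s * f (t * s ^ 2))
      - (J0 + t * (∫ s in (-1 : ℝ)..1, s ^ 2 * W p s)
          + c / 2 * t ^ 2 * (∫ s in (-1 : ℝ)..1, s ^ 4 * W p s))
      = ∫ s in (-1 : ℝ)..1,
          W p s * (f (t * s ^ 2) - 1 - t * s ^ 2 - c / 2 * (t * s ^ 2) ^ 2) := by
    rw [e, intervalIntegral.integral_sub (G_intable hp hf_pos hf_mono t)
        (((W_intable hp).add ((J2_intable hp).const_mul t)).add ((J4_intable hp).const_mul _)),
      intervalIntegral.integral_add ((W_intable hp).add ((J2_intable hp).const_mul t))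
        ((J4_intable hp).const_mul _),
      intervalIntegral.integral_add (W_intable hp) ((J2_intable hp).const_mul t),
      intervalIntegral.integral_const_mul, intervalIntegral.integral_const_mul]
  rw [heq]
  have hptwise : ∀ s ∈ Set.Icc (-1 : ℝ) 1,
      |W p s * (f (t * s ^ 2) - 1 - t * s ^ 2 - c / 2 * (t * s ^ 2) ^ 2)|
        ≤ ε' * t ^ 2 * W p s := by
    intro s hs
    have hs2 : s ^ 2 ≤ 1 := by nlinarith [hs.1, hs.2]
    have hW : 0 ≤ W p s := W_nonneg p hs
    have harg : |t * s ^ 2| < δ := by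
      rw [abs_mul]
      calc |t| * |s ^ 2| ≤ |t| * 1 := by
            apply mul_le_mul_of_nonneg_left _ (abs_nonneg t)
            rw [abs_of_nonneg (sq_nonneg s)]; exact hs2
        _ = |t| := mul_one _
        _ < δ := ht
    have hb := hδ _ harg
    rw [abs_mul, abs_of_nonneg hW]
    calc W p s * |f (t * s ^ 2) - 1 - t * s ^ 2 - c / 2 * (t * s ^ 2) ^ 2|
        ≤ W p s * (ε' * (t * s ^ 2) ^ 2) := mul_le_mul_of_nonneg_left hb hW
      _ ≤ ε' * t ^ 2 * W p s := by
          have h1 : s ^ 2 * s ^ 2 ≤ 1 := by nlinarith [hs2, sq_nonneg s]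
          have hs4 : (t * s ^ 2) ^ 2 ≤ t ^ 2 := by
            calc (t * s ^ 2) ^ 2 = t ^ 2 * (s ^ 2 * s ^ 2) := by ring
              _ ≤ t ^ 2 * 1 := mul_le_mul_of_nonneg_left h1 (sq_nonneg t)
              _ = t ^ 2 := mul_one _
          nlinarith [mul_le_mul_of_nonneg_left hs4 (mul_nonneg hε'.le hW)]
  calc ‖∫ s in (-1 : ℝ)..1,
          W p s * (f (t * s ^ 2) - 1 - t * s ^ 2 - c / 2 * (t * s ^ 2) ^ 2)‖
      ≤ ∫ s in (-1 : ℝ)..1,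
          |W p s * (f (t * s ^ 2) - 1 - t * s ^ 2 - c / 2 * (t * s ^ 2) ^ 2)| := by
        rw [Real.norm_eq_abs]
        exact intervalIntegral.abs_integral_le_integral_abs (by norm_num)
    _ ≤ ∫ s in (-1 : ℝ)..1, ε' * t ^ 2 * W p s := by
        apply intervalIntegral.integral_mono_on (by norm_num) hInt.abs
          ((W_intable hp).const_mul _) hptwise
    _ = ε' * t ^ 2 * J0 := intervalIntegral.integral_const_mul _ _
    _ = ε * t ^ 2 := by
        rw [hε'_def]; field_simp
    _ = ε * ‖t ^ 2‖ := by rw [Real.norm_eq_abs, abs_of_nonneg (sq_nonneg t)]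

lemma main_littleO {p : ℕ} (hp : 2 ≤ p) {f : ℝ → ℝ}
    (hf_pos : ∀ x, 0 < f x) (hf_mono : Monotone f)
    (hf_diff : ∀ᶠ x in 𝓝 (0 : ℝ), DifferentiableAt ℝ f x)
    (hf_diff2 : DifferentiableAt ℝ (deriv f) 0)
    (hf0 : f 0 = 1) (hf'0 : deriv f 0 = 1) :
    (fun t => Real.log (cKF p t f / c0 p)
        - (-t / (p : ℝ) - (3 * t ^ 2 / (2 * (p : ℝ) * ((p : ℝ) + 2))) * deriv (deriv f) 0
            + t ^ 2 / (2 * (p : ℝ) ^ 2)))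
      =o[𝓝[≠] (0 : ℝ)] fun t => t ^ 2 := by
  have hlle : (𝓝[≠] (0 : ℝ)) ≤ 𝓝 0 := nhdsWithin_le_nhds
  have hppos : (0 : ℝ) < (p : ℝ) := by
    have : 0 < p := lt_of_lt_of_le two_pos hp
    exact_mod_cast this
  have hp2 : (0 : ℝ) < (p : ℝ) + 2 := by positivity
  set c : ℝ := deriv (deriv f) 0 with hc_def
  set J0 : ℝ := ∫ s in (-1 : ℝ)..1, W p s with hJ0_def
  set J2 : ℝ := ∫ s in (-1 : ℝ)..1, s ^ 2 * W p s with hJ2_def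
  set J4 : ℝ := ∫ s in (-1 : ℝ)..1, s ^ 4 * W p s with hJ4_def
  have hJ0 : 0 < J0 := J0_pos hp
  have hm2 : (p : ℝ) * J2 = J0 := moment2 hp
  have hm4 : ((p : ℝ) + 2) * J4 = 3 * J2 := moment4 hp
  have hJ2e : J2 = J0 / (p : ℝ) := by
    rw [eq_div_iff hppos.ne']; linear_combination hm2
  have hJ4e : J4 = 3 * J0 / ((p : ℝ) * ((p : ℝ) + 2)) := by
    rw [eq_div_iff (mul_ne_zero hppos.ne' hp2.ne')]
    linear_combination (p : ℝ) * hm4 + 3 * hm2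
  set C : ℝ := 3 * c / (2 * (p : ℝ) * ((p : ℝ) + 2)) with hC_def
  set v : ℝ → ℝ := fun t => (∫ s in (-1 : ℝ)..1, W p s * f (t * s ^ 2)) / J0 - 1 with hv_def
  have hG := G_expansion (f := f) hp hf_pos hf_mono hf_diff hf_diff2 hf0 hf'0
  rw [← hc_def, ← hJ0_def, ← hJ2_def, ← hJ4_def] at hG
  -- normalized expansion
  have hU : (fun t => v t - (t / (p : ℝ) + C * t ^ 2)) =o[𝓝[≠] (0 : ℝ)] fun t => t ^ 2 := by
    have h := hG.const_mul_left (1 / J0)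
    refine h.congr (fun t => ?_) (fun t => rfl)
    simp only [hv_def, hC_def]
    rw [hJ2e, hJ4e]
    field_simp
    ring
  have h21 : (fun t : ℝ => t ^ 2) =o[𝓝[≠] (0 : ℝ)] fun t => t := by
    have h := (Asymptotics.isLittleO_pow_pow (by norm_num : 1 < 2)).mono hlle
    simpa [pow_one] using h
  have h32 : (fun t : ℝ => t ^ 3) =o[𝓝[≠] (0 : ℝ)] fun t => t ^ 2 :=
    (Asymptotics.isLittleO_pow_pow (by norm_num : 2 < 3)).mono hlle
  have hvp : (fun t : ℝ => t / (p : ℝ)) =O[𝓝[≠] (0 : ℝ)] fun t => t :=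
    (((isBigO_refl (fun t : ℝ => t) _).const_mul_left (1 / (p : ℝ))).congr
      (fun t => by ring) (fun t => rfl))
  have hvO : v =O[𝓝[≠] (0 : ℝ)] fun t => t := by
    have h1 : (fun t => v t - (t / (p : ℝ) + C * t ^ 2)) =O[𝓝[≠] (0 : ℝ)] fun t => t :=
      hU.isBigO.trans h21.isBigO
    have h2 : (fun t : ℝ => t / (p : ℝ) + C * t ^ 2) =O[𝓝[≠] (0 : ℝ)] fun t => t :=
      hvp.add ((h21.isBigO.const_mul_left C).congr (fun t => rfl) (fun t => rfl))
    exact ((h1.add h2).congr (fun t => by ring) (fun t => rfl))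
  have hid : Tendsto (fun t : ℝ => t) (𝓝[≠] (0 : ℝ)) (𝓝 0) := tendsto_id.mono_left hlle
  have hv0 : Tendsto v (𝓝[≠] (0 : ℝ)) (𝓝 0) := hvO.trans_tendsto hid
  -- log identity
  have hlog : ∀ t : ℝ, Real.log (cKF p t f / c0 p) = -Real.log (1 + v t) := by
    intro t
    have hGt : 0 < ∫ s in (-1 : ℝ)..1, W p s * f (t * s ^ 2) :=
      G_pos hp hf_pos hf_mono t
    have ecKF : cKF p t f = 1 / ∫ s in (-1 : ℝ)..1, W p s * f (t * s ^ 2) := by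
      simp only [cKF, W]
    have ec0 : c0 p = 1 / J0 := by
      rw [hJ0_def]; simp only [c0, W]
    have h1 : 1 + v t = (∫ s in (-1 : ℝ)..1, W p s * f (t * s ^ 2)) / J0 := by
      simp only [hv_def]; ring
    rw [ecKF, ec0, h1]
    have e2 : (1 / ∫ s in (-1 : ℝ)..1, W p s * f (t * s ^ 2)) / (1 / J0)
        = ((∫ s in (-1 : ℝ)..1, W p s * f (t * s ^ 2)) / J0)⁻¹ := by
      field_simp
    rw [e2, Real.log_inv]
  -- T1 : log remainder
  have hhalf : ∀ᶠ t in 𝓝[≠] (0 : ℝ), |v t| ≤ 1 / 2 := by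
    have h := hv0 (Metric.ball_mem_nhds (0 : ℝ) (by norm_num : (0:ℝ) < 1/2))
    filter_upwards [h] with t ht
    have : |v t| < 1 / 2 := by simpa [Real.dist_eq] using ht
    exact this.le
  have hT1b : (fun t => Real.log (1 + v t) - v t + (v t) ^ 2 / 2)
      =O[𝓝[≠] (0 : ℝ)] fun t => (v t) ^ 3 := by
    refine Asymptotics.IsBigO.of_bound 2 ?_
    filter_upwards [hhalf] with t ht
    have h1 : |(-v t)| < 1 := by rw [abs_neg]; linarith [abs_nonneg (v t)]
    have h2 := Real.abs_log_sub_add_sum_range_le h1 2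
    have h3 : (∑ i ∈ Finset.range 2, (-v t) ^ (i + 1) / (i + 1))
        = -v t + (v t) ^ 2 / 2 := by
      simp [Finset.sum_range_succ]
      ring
    rw [h3, abs_neg] at h2
    rw [sub_neg_eq_add] at h2
    norm_num at h2
    have h5 : |v t| ^ 3 / (1 - |v t|) ≤ 2 * |v t| ^ 3 := by
      rw [div_le_iff₀ (by linarith [abs_nonneg (v t)] : (0:ℝ) < 1 - |v t|)]
      nlinarith [abs_nonneg (v t), pow_nonneg (abs_nonneg (v t)) 3]
    rw [Real.norm_eq_abs, Real.norm_eq_abs]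
    calc |Real.log (1 + v t) - v t + v t ^ 2 / 2|
        = |-v t + v t ^ 2 / 2 + Real.log (1 + v t)| := by congr 1; ring
      _ ≤ |v t| ^ 3 / (1 - |v t|) := h2
      _ ≤ 2 * |v t| ^ 3 := h5
      _ = 2 * |v t ^ 3| := by rw [abs_pow]
  have hT1 : (fun t => Real.log (1 + v t) - v t + (v t) ^ 2 / 2)
      =o[𝓝[≠] (0 : ℝ)] fun t => t ^ 2 := by
    refine hT1b.trans_isLittleO ?_
    exact ((hvO.pow 3).trans_isLittleO h32)
  -- T3 : square difference
  have hv1 : (fun t => v t - t / (p : ℝ)) =o[𝓝[≠] (0 : ℝ)] fun t => t :=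
    ((hU.trans h21).add ((h21.const_mul_left C).congr (fun t => rfl) (fun t => rfl))).congr
      (fun t => by ring) (fun t => rfl)
  have hv2 : (fun t => v t + t / (p : ℝ)) =O[𝓝[≠] (0 : ℝ)] fun t => t := hvO.add hvp
  have hT3 : (fun t => ((v t) ^ 2 - t ^ 2 / (p : ℝ) ^ 2) / 2)
      =o[𝓝[≠] (0 : ℝ)] fun t => t ^ 2 := by
    have h := (hv1.mul_isBigO hv2).const_mul_left (1 / 2)
    exact h.congr (fun t => by field_simp; ring) (fun t => by ring)
  -- assemble
  have hsum := (hT1.neg_left.add hU.neg_left).add hT3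
  refine hsum.congr (fun t => ?_) (fun t => rfl)
  rw [hlog t, hC_def]
  field_simp
  ring

end Stmt13Aux

/-- expansion of the log normalizing constant.
For `f ∈ 𝓕` and nonzero `κ_n → 0`,
`log(c_{p,κ_n,f}/c_p) = -κ_n/p - (3κ_n²/(2p(p+2))) f''(0) + κ_n²/(2p²) + o(κ_n²)`. -/
theorem log_normalizing_constant_expansion
    (p : ℕ) (hp : 2 ≤ p)
    (f : ℝ → ℝ) (hf_pos : ∀ x, 0 < f x) (hf_mono : Monotone f)
    (hf_diff : ∀ᶠ x in 𝓝 (0:ℝ), DifferentiableAt ℝ f x)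
    (hf_diff2 : DifferentiableAt ℝ (deriv f) 0)
    (hf0 : f 0 = 1) (hf'0 : deriv f 0 = 1)
    (κ : ℕ → ℝ) (hκ0 : ∀ n, κ n ≠ 0) (hκ : Tendsto κ atTop (𝓝 (0:ℝ))) :
    (fun n => Real.log (cKF p (κ n) f / c0 p)
        - (-(κ n) / (p:ℝ) - (3 * κ n ^ 2 / (2 * (p:ℝ) * ((p:ℝ) + 2))) * deriv (deriv f) 0
            + κ n ^ 2 / (2 * (p:ℝ) ^ 2)))
      =o[atTop] (fun n => κ n ^ 2) := by
  have hmain := Stmt13Aux.main_littleO hp hf_pos hf_mono hf_diff hf_diff2 hf0 hf'0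
  have hten : Tendsto κ atTop (𝓝[≠] (0 : ℝ)) :=
    tendsto_nhdsWithin_iff.mpr ⟨hκ, Filter.Eventually.of_forall fun n => hκ0 n⟩
  have h := hmain.comp_tendsto hten
  simpa [Function.comp_def, neg_div] using h

end
end

section
/- Fix an integer p ≥ 2, f ∈ 𝓕, and a sequence (κ_n) of nonzero real numbers with κ_n → 0. Define E_{n1} := c_p ∫_{−1}^{1} (1−s²)^{(p−3)/2} log f(κ_n s²) ds. Then, as n → ∞, E_{n1} = κ_n/p + (3 κ_n² / (2 p (p+2))) (f''(0) − 1) + o(κ_n²). -/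
open MeasureTheory Filter Real Asymptotics
open scoped ENNReal NNReal Topology

noncomputable section

namespace FLM

def W (e : ℝ) (s : ℝ) : ℝ := (1 - s ^ 2) ^ e

lemma W_meas (e : ℝ) : Measurable (W e) := by unfold W; measurability

lemma mem_of_uIoc {s : ℝ} (hs : s ∈ Set.uIoc (-1:ℝ) 1) : -1 < s ∧ s ≤ 1 := by
  rw [Set.uIoc_of_le (by norm_num : (-1:ℝ) ≤ 1)] at hs
  exact ⟨hs.1, hs.2⟩

lemma W_nonneg (e : ℝ) {s : ℝ} (h1 : -1 ≤ s) (h2 : s ≤ 1) : 0 ≤ W e s :=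
  Real.rpow_nonneg (by nlinarith) e

lemma ae_ne_one : ∀ᵐ s : ℝ, s ≠ (1:ℝ) := by
  have : volume ({(1:ℝ)} : Set ℝ) = 0 := measure_singleton 1
  rw [ae_iff]
  convert this using 2
  ext x; simp

lemma g_int : IntervalIntegrable
    (fun s : ℝ => (1 - s) ^ (-(1/2):ℝ) + (1 + s) ^ (-(1/2):ℝ)) volume (-1) 1 := by
  have h0 : IntervalIntegrable (fun x : ℝ => x ^ (-(1/2):ℝ)) volume 0 2 :=
    intervalIntegral.intervalIntegrable_rpow' (by norm_num)
  have h1 := h0.comp_sub_left 1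
  have h2 := h0.comp_add_left 1
  norm_num at h1 h2
  exact (h1.symm.add h2)

lemma W_int {e : ℝ} (he : -(1/2:ℝ) ≤ e) : IntervalIntegrable (W e) volume (-1) 1 := by
  refine g_int.mono_fun' ((W_meas e).aestronglyMeasurable) ?_
  have hmem := ae_restrict_mem (μ := volume) (measurableSet_uIoc (a := (-1:ℝ)) (b := 1))
  have hne := ae_restrict_of_ae (μ := volume) (s := Set.uIoc (-1:ℝ) 1) ae_ne_one
  filter_upwards [hmem, hne] with s hs hsne
  obtain ⟨hl, hr⟩ := mem_of_uIoc hs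
  have hr' : s < 1 := lt_of_le_of_ne hr hsne
  have hpos : (0:ℝ) < 1 - s ^ 2 := by nlinarith
  have h1 : ‖W e s‖ = W e s := Real.norm_of_nonneg (W_nonneg e hl.le hr)
  rw [h1]
  have step1 : W e s ≤ (1 - s ^ 2) ^ (-(1/2):ℝ) :=
    Real.rpow_le_rpow_of_exponent_ge hpos (by nlinarith) he
  refine step1.trans ?_
  rcases le_or_gt 0 s with hsgn | hsgn
  · have hb : (1 - s^2 : ℝ) ^ (-(1/2):ℝ) ≤ (1 - s) ^ (-(1/2):ℝ) :=
      Real.rpow_le_rpow_of_nonpos (by linarith) (by nlinarith) (by norm_num)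
    have : (0:ℝ) ≤ (1 + s) ^ (-(1/2):ℝ) := Real.rpow_nonneg (by linarith) _
    linarith
  · have hb : (1 - s^2 : ℝ) ^ (-(1/2):ℝ) ≤ (1 + s) ^ (-(1/2):ℝ) :=
      Real.rpow_le_rpow_of_nonpos (by linarith) (by nlinarith) (by norm_num)
    have : (0:ℝ) ≤ (1 - s) ^ (-(1/2):ℝ) := Real.rpow_nonneg (by linarith) _
    linarith

lemma W_mul_int {e : ℝ} (he : -(1/2:ℝ) ≤ e) {φ : ℝ → ℝ}
    (hφ : AEStronglyMeasurable φ (volume.restrict (Set.uIoc (-1:ℝ) 1))) {C : ℝ}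
    (hC : ∀ s ∈ Set.uIoc (-1:ℝ) 1, |φ s| ≤ C) :
    IntervalIntegrable (fun s => W e s * φ s) volume (-1) 1 := by
  refine ((W_int he).const_mul C).mono_fun'
    (((W_meas e).aestronglyMeasurable.restrict).mul hφ) ?_
  have hmem := ae_restrict_mem (μ := volume) (measurableSet_uIoc (a := (-1:ℝ)) (b := 1))
  filter_upwards [hmem] with s hs
  obtain ⟨hl, hr⟩ := mem_of_uIoc hs
  have hw := W_nonneg e hl.le hr
  have : ‖W e s * φ s‖ = W e s * |φ s| := by
    rw [norm_mul, Real.norm_of_nonneg hw, Real.norm_eq_abs]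
  rw [this, mul_comm C (W e s)]
  exact mul_le_mul_of_nonneg_left (hC s hs) hw

lemma pow_mul_W_int {e : ℝ} (he : -(1/2:ℝ) ≤ e) (k : ℕ) :
    IntervalIntegrable (fun s => s ^ k * W e s) volume (-1) 1 := by
  have heq : (fun s => s ^ k * W e s) = fun s => W e s * s ^ k := by
    funext s; ring
  rw [heq]
  refine W_mul_int he (φ := fun s => s ^ k)
    ((measurable_id.pow_const k).aestronglyMeasurable.restrict) (C := 1) ?_
  intro s hs
  obtain ⟨hl, hr⟩ := mem_of_uIoc hs
  have : |s| ≤ 1 := abs_le.mpr ⟨hl.le, hr⟩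
  calc |s ^ k| = |s| ^ k := by rw [abs_pow]
  _ ≤ 1 ^ k := pow_le_pow_left₀ (abs_nonneg s) this k
  _ = 1 := one_pow k


lemma key_ftc {e : ℝ} (he : (1/2:ℝ) ≤ e) (k : ℕ) :
    ((k:ℝ) + 1) * ∫ s in (-1:ℝ)..1, s ^ k * W e s
      = 2 * e * ∫ s in (-1:ℝ)..1, s ^ (k+2) * W (e-1) s := by
  have he' : -(1/2:ℝ) ≤ e - 1 := by linarith
  have he0 : -(1/2:ℝ) ≤ e := by linarith
  have hene : e ≠ 0 := ne_of_gt (by linarith)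
  set G : ℝ → ℝ := fun s => s ^ (k+1) * W e s with hG
  set D : ℝ → ℝ := fun s =>
    ((k:ℝ)+1) * (s ^ k * W e s) - 2*e*(s ^ (k+2) * W (e-1) s) with hD
  have hder : ∀ s ∈ Set.Ioo (-1:ℝ) 1, HasDerivAt G (D s) s := by
    intro s hs
    have hpos : (0:ℝ) < 1 - s ^ 2 := by nlinarith [hs.1, hs.2]
    have hinner : HasDerivAt (fun s : ℝ => 1 - s ^ 2) (-(2*s)) s := by
      simpa using ((hasDerivAt_pow 2 s).const_sub 1)
    have hW : HasDerivAt (fun s : ℝ => W e s) (-(2*s) * e * (1 - s^2) ^ (e - 1)) s :=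
      hinner.rpow_const (Or.inl hpos.ne')
    have hpow : HasDerivAt (fun s : ℝ => s ^ (k+1)) (((k:ℝ)+1) * s ^ k) s := by
      simpa using hasDerivAt_pow (k+1) s
    have : HasDerivAt (fun s => s ^ (k+1) * W e s) _ s := hpow.mul hW
    convert this using 1
    simp only [hD, W]
    ring
  have hcont : ContinuousOn G (Set.Icc (-1:ℝ) 1) := by
    have hc : Continuous (fun s : ℝ => W e s) := by
      apply Continuous.rpow_const (by continuity)
      intro s; right; linarith
    exact ((continuous_pow (k+1)).mul hc).continuousOn
  have hint : IntervalIntegrable D volume (-1) 1 :=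
    ((pow_mul_W_int he0 k).const_mul _).sub ((pow_mul_W_int he' (k+2)).const_mul _)
  have hftc := intervalIntegral.integral_eq_sub_of_hasDeriv_right_of_le
    (by norm_num : (-1:ℝ) ≤ 1) hcont (fun s hs => (hder s hs).hasDerivWithinAt) hint
  have hG1 : G 1 = 0 := by
    have h0 : ((1:ℝ) - 1 ^ 2) = 0 := by norm_num
    simp [hG, W, h0, Real.zero_rpow hene]
  have hGm1 : G (-1) = 0 := by
    have h0 : ((1:ℝ) - (-1:ℝ) ^ 2) = 0 := by norm_num
    simp [hG, W, h0, Real.zero_rpow hene]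
  rw [hG1, hGm1, sub_zero] at hftc
  have hsplit : (∫ s in (-1:ℝ)..1, D s)
      = ((k:ℝ)+1) * (∫ s in (-1:ℝ)..1, s ^ k * W e s)
        - 2*e*(∫ s in (-1:ℝ)..1, s ^ (k+2) * W (e-1) s) := by
    simp only [hD]
    rw [intervalIntegral.integral_sub ((pow_mul_W_int he0 k).const_mul _)
      ((pow_mul_W_int he' (k+2)).const_mul _),
      intervalIntegral.integral_const_mul, intervalIntegral.integral_const_mul]
  rw [hsplit] at hftc
  linarith

lemma W_reduce {e : ℝ} (he : -(1/2:ℝ) ≤ e) (k : ℕ) :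
    (∫ s in (-1:ℝ)..1, s ^ k * W (e+1) s)
      = (∫ s in (-1:ℝ)..1, s ^ k * W e s) - ∫ s in (-1:ℝ)..1, s ^ (k+2) * W e s := by
  rw [← intervalIntegral.integral_sub (pow_mul_W_int he k) (pow_mul_W_int he (k+2))]
  apply intervalIntegral.integral_congr_ae
  filter_upwards [ae_ne_one] with s hsne hs
  obtain ⟨hl, hr⟩ := mem_of_uIoc hs
  have hr' : s < 1 := lt_of_le_of_ne hr hsne
  have hpos : (0:ℝ) < 1 - s ^ 2 := by nlinarith
  have hws : W (e+1) s = W e s * (1 - s^2) := by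
    simp only [W]; rw [Real.rpow_add_one hpos.ne']
  rw [hws]; simp only [W]; ring


lemma peano (f : ℝ → ℝ) (hf_pos : ∀ x, 0 < f x)
    (hf_diff : ∀ᶠ x in 𝓝 (0:ℝ), DifferentiableAt ℝ f x)
    (hf_diff2 : DifferentiableAt ℝ (deriv f) 0)
    (hf0 : f 0 = 1) (hf'0 : deriv f 0 = 1)
    {ε : ℝ} (hε : 0 < ε) :
    ∃ δ > 0, ∀ x : ℝ, |x| ≤ δ →
      |Real.log (f x) - x - ((deriv (deriv f) 0 - 1)/2) * x ^ 2| ≤ ε * x ^ 2 := by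
  set m := deriv (deriv f) 0 - 1 with hm
  clear_value m
  set q : ℝ → ℝ := fun x => deriv f x / f x with hq
  have hq00 : q 0 = 1 := by simp [hq, hf0, hf'0]
  have hq0 : HasDerivAt q m 0 := by
    have h1 : HasDerivAt (deriv f) (deriv (deriv f) 0) 0 := hf_diff2.hasDerivAt
    have h2 : HasDerivAt f (deriv f 0) 0 := (hf_diff.self_of_nhds).hasDerivAt
    have : HasDerivAt (fun x => deriv f x / f x) _ 0 := h1.div h2 (by rw [hf0]; norm_num)
    convert this using 1
    rw [hf0, hf'0, hm]; norm_num
  have hslope : Tendsto (fun x => (q x - 1)/(2*x)) (𝓝[≠] (0:ℝ)) (𝓝 (m/2)) := by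
    have h1 : Tendsto (slope q 0) (𝓝[≠] (0:ℝ)) (𝓝 m) :=
      hasDerivAt_iff_tendsto_slope.mp hq0
    have h2 := h1.div_const 2
    refine h2.congr' ?_
    filter_upwards [self_mem_nhdsWithin] with x hx
    have hx0 : x ≠ 0 := hx
    rw [slope_def_field]
    rw [hq00, sub_zero, div_div]
    ring
  have hnum : ∀ᶠ x in 𝓝 (0:ℝ),
      HasDerivAt (fun y => Real.log (f y) - y) (q x - 1) x := by
    filter_upwards [hf_diff] with x hx
    exact (hx.hasDerivAt.log (hf_pos x).ne').sub (hasDerivAt_id x)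
  have hden : ∀ x : ℝ, HasDerivAt (fun y : ℝ => y ^ 2) (2*x) x := by
    intro x
    simpa using hasDerivAt_pow 2 x
  have hL : Tendsto (fun x => (Real.log (f x) - x) / x ^ 2) (𝓝[≠] (0:ℝ)) (𝓝 (m/2)) := by
    apply HasDerivAt.lhopital_zero_nhdsNE
    · exact eventually_nhdsWithin_of_eventually_nhds hnum
    · exact Eventually.of_forall (fun x => hden x)
    · filter_upwards [self_mem_nhdsWithin] with x hx
      have hx0 : x ≠ 0 := hx
      simpa using hx0
    · have hc : ContinuousAt (fun y => Real.log (f y) - y) 0 := by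
        have : ContinuousAt f 0 := (hf_diff.self_of_nhds).continuousAt
        exact ((Real.continuousAt_log (by rw [hf0]; norm_num)).comp this).sub
          continuousAt_id
      have := hc.tendsto
      rw [show Real.log (f 0) - 0 = 0 by rw [hf0]; simp] at this
      exact tendsto_nhdsWithin_of_tendsto_nhds this
    · have : Tendsto (fun x : ℝ => x ^ 2) (𝓝 (0:ℝ)) (𝓝 ((0:ℝ) ^ 2)) :=
        (continuous_pow 2).continuousAt
      rw [show ((0:ℝ) ^ 2) = 0 by norm_num] at this
      exact tendsto_nhdsWithin_of_tendsto_nhds this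
    · exact hslope
  have hr : Tendsto
      (fun x => (Real.log (f x) - x - (m/2) * x ^ 2) / x ^ 2) (𝓝[≠] (0:ℝ)) (𝓝 0) := by
    have h2 := hL.sub_const (m/2)
    rw [sub_self] at h2
    refine h2.congr' ?_
    filter_upwards [self_mem_nhdsWithin] with x hx
    have hx0 : x ≠ 0 := hx
    have hx2 : x ^ 2 ≠ 0 := pow_ne_zero 2 hx0
    field_simp
  rw [Metric.tendsto_nhdsWithin_nhds] at hr
  obtain ⟨δ, hδpos, hδ⟩ := hr ε hε
  refine ⟨δ/2, by linarith, fun x hx => ?_⟩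
  rcases eq_or_ne x 0 with rfl | hx0
  · simp [hf0]
  · have hmem : x ∈ ({(0:ℝ)}ᶜ : Set ℝ) := hx0
    have hdist : dist x 0 < δ := by
      rw [Real.dist_eq, sub_zero]
      calc |x| ≤ δ/2 := hx
      _ < δ := by linarith
    have := hδ hmem hdist
    rw [Real.dist_eq, sub_zero] at this
    have hx2 : (0:ℝ) < x ^ 2 := by positivity
    rw [abs_div, abs_of_pos hx2, div_lt_iff₀ hx2] at this
    linarith [this]


end FLM

open FLM

set_option maxHeartbeats 1000000 in
/-- expansion of `E_{n1}`.
For `f ∈ 𝓕` and nonzero `κ_n → 0`,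
`E_{n1} = c_p ∫_{-1}^1 (1-s²)^{(p-3)/2} log f(κ_n s²) ds`
satisfies `E_{n1} = κ_n/p + (3κ_n²/(2p(p+2)))(f''(0) - 1) + o(κ_n²)`. -/
theorem first_log_moment_expansion
    (p : ℕ) (hp : 2 ≤ p)
    (f : ℝ → ℝ) (hf_pos : ∀ x, 0 < f x) (hf_mono : Monotone f)
    (hf_diff : ∀ᶠ x in 𝓝 (0:ℝ), DifferentiableAt ℝ f x)
    (hf_diff2 : DifferentiableAt ℝ (deriv f) 0)
    (hf0 : f 0 = 1) (hf'0 : deriv f 0 = 1)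
    (κ : ℕ → ℝ) (hκ0 : ∀ n, κ n ≠ 0) (hκ : Tendsto κ atTop (𝓝 (0:ℝ))) :
    (fun n =>
      c0 p * (∫ s in (-1:ℝ)..1,
          (1 - s ^ 2) ^ (((p : ℝ) - 3) / 2) * Real.log (f (κ n * s ^ 2)))
        - (κ n / (p:ℝ) + (3 * κ n ^ 2 / (2 * (p:ℝ) * ((p:ℝ) + 2))) * (deriv (deriv f) 0 - 1)))
      =o[atTop] (fun n => κ n ^ 2) := by
  classical
  have hfm : Measurable f := hf_mono.measurable
  set a : ℝ := ((p:ℝ) - 3) / 2 with ha_def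
  set P : ℝ := (p:ℝ) with hP_def
  have hP2 : (2:ℝ) ≤ P := by rw [hP_def]; exact_mod_cast hp
  have hPpos : (0:ℝ) < P := by linarith
  have hP0 : P ≠ 0 := ne_of_gt hPpos
  have hP2pos : (0:ℝ) < P + 2 := by linarith
  have hP20 : P + 2 ≠ 0 := ne_of_gt hP2pos
  have ha : -(1/2:ℝ) ≤ a := by rw [ha_def]; linarith
  have ha1 : (1/2:ℝ) ≤ a + 1 := by rw [ha_def]; linarith
  have h2a : 2*a + 3 = P := by rw [ha_def]; ring
  set J0 : ℝ := ∫ s in (-1:ℝ)..1, W a s with hJ0_def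
  set J2 : ℝ := ∫ s in (-1:ℝ)..1, s ^ 2 * W a s with hJ2_def
  set J4 : ℝ := ∫ s in (-1:ℝ)..1, s ^ 4 * W a s with hJ4_def
  have hc0 : c0 p = 1 / J0 := rfl
  clear_value J0 J2 J4
  have hA := key_ftc ha1 0
  have hB := W_reduce ha 0
  have hC := key_ftc ha1 2
  have hD := W_reduce ha 2
  simp only [add_sub_cancel_right] at hA hC
  norm_num at hA hB hC hD
  simp only [← hJ0_def, ← hJ2_def, ← hJ4_def] at hA hB hC hD
  have hJ2 : P * J2 = J0 := by linear_combination (-J2) * h2a - hA + hB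
  have hR : (P+2) * J4 = 3 * J2 := by linear_combination (-1) * hC + 3 * hD + (-J4) * h2a
  have hJ4 : P * (P+2) * J4 = 3 * J0 := by linear_combination P * hR + 3 * hJ2
  have hJ0pos : 0 < J0 := by
    rw [hJ0_def]
    refine intervalIntegral.intervalIntegral_pos_of_pos_on (W_int ha) ?_ (by norm_num)
    intro x hx
    exact Real.rpow_pos_of_pos (by nlinarith [hx.1, hx.2]) a
  have hJ4pos : 0 < J4 := by nlinarith [mul_pos hPpos hP2pos]
  have hc0pos : 0 < c0 p := by rw [hc0]; positivity
  have e1 : c0 p * J2 = 1 / P := by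
    rw [hc0]
    field_simp
    linear_combination hJ2
  have e2 : c0 p * J4 = 3 / (P * (P+2)) := by
    rw [hc0]
    field_simp
    linear_combination hJ4
  set m := deriv (deriv f) 0 - 1 with hm
  clear_value m
  rw [Asymptotics.isLittleO_iff]
  intro c hc
  have hcJ : 0 < c0 p * J4 := mul_pos hc0pos hJ4pos
  set ε' := c / (c0 p * J4) with hε'
  clear_value ε'
  have hε'pos : 0 < ε' := by rw [hε']; exact div_pos hc hcJ
  obtain ⟨δ, hδpos, hδ⟩ := peano f hf_pos hf_diff hf_diff2 hf0 hf'0 hε'pos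
  rw [← hm] at hδ
  have hev : ∀ᶠ n in atTop, |κ n| < δ := by
    have := Metric.tendsto_nhds.mp hκ δ hδpos
    simpa [Real.dist_eq] using this
  filter_upwards [hev] with n hn
  set t := κ n with htdef
  clear_value t
  set r : ℝ → ℝ := fun x => Real.log (f x) - x - (m/2) * x ^ 2 with hrdef
  clear_value r
  have hδ' : ∀ x : ℝ, |x| ≤ δ → |r x| ≤ ε' * x ^ 2 := by
    intro x hx
    simpa [hrdef] using hδ x hx
  have hWdef : ∀ s : ℝ, (1 - s ^ 2) ^ a = W a s := fun s => rfl
  simp only [hWdef]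
  have hts : ∀ s : ℝ, s ∈ Set.uIoc (-1:ℝ) 1 → |t * s ^ 2| ≤ δ := by
    intro s hs
    obtain ⟨hl, hr'⟩ := mem_of_uIoc hs
    have hs1 : |s| ≤ 1 := abs_le.mpr ⟨hl.le, hr'⟩
    have : |t * s ^ 2| = |t| * s ^ 2 := by rw [abs_mul, abs_of_nonneg (sq_nonneg s)]
    rw [this]
    have hs2 : s ^ 2 ≤ 1 := by
      rw [← sq_abs s]
      exact pow_le_one₀ (abs_nonneg s) hs1
    nlinarith [abs_nonneg t]
  -- measurability of the remainder composition
  have hφm : AEStronglyMeasurable (fun s : ℝ => r (t * s ^ 2))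
      (volume.restrict (Set.uIoc (-1:ℝ) 1)) := by
    have h1 : Measurable (fun s : ℝ => t * s ^ 2) := by measurability
    have h2 : Measurable r := by
      rw [hrdef]
      apply Measurable.sub
      apply Measurable.sub
      · exact Real.measurable_log.comp hfm
      · exact measurable_id
      · measurability
    exact (h2.comp h1).aestronglyMeasurable.restrict
  have hi2 : IntervalIntegrable (fun s => t * (s ^ 2 * W a s)) volume (-1) 1 :=
    (pow_mul_W_int ha 2).const_mul t
  have hi4 : IntervalIntegrable (fun s => ((m/2) * t ^ 2) * (s ^ 4 * W a s)) volume (-1) 1 :=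
    (pow_mul_W_int ha 4).const_mul _
  have hi_r : IntervalIntegrable (fun s => W a s * r (t * s ^ 2)) volume (-1) 1 := by
    refine W_mul_int ha hφm (C := ε' * t ^ 2) ?_
    intro s hs
    obtain ⟨hl, hr'⟩ := mem_of_uIoc hs
    have hb := hδ' _ (hts s hs)
    have hs1 : s ^ 2 ≤ 1 := by nlinarith
    have hs2 : (t * s ^ 2) ^ 2 ≤ t ^ 2 := by nlinarith [sq_nonneg t, sq_nonneg s, mul_nonneg (sq_nonneg t) (sq_nonneg s)]
    calc |r (t * s ^ 2)| ≤ ε' * (t * s ^ 2) ^ 2 := hb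
    _ ≤ ε' * t ^ 2 := by nlinarith
  set Rn : ℝ := ∫ s in (-1:ℝ)..1, W a s * r (t * s ^ 2) with hRn_def
  clear_value Rn
  have hIval : (∫ s in (-1:ℝ)..1, W a s * Real.log (f (t * s ^ 2)))
      = t * J2 + ((m/2) * t ^ 2) * J4 + Rn := by
    have hsplit : (∫ s in (-1:ℝ)..1, W a s * Real.log (f (t * s ^ 2)))
        = ∫ s in (-1:ℝ)..1,
            (t * (s ^ 2 * W a s) + (((m/2) * t ^ 2) * (s ^ 4 * W a s)
              + W a s * r (t * s ^ 2))) := by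
      apply intervalIntegral.integral_congr
      intro s _
      simp only [hrdef]
      ring
    rw [hsplit, intervalIntegral.integral_add hi2 (hi4.add hi_r),
      intervalIntegral.integral_add hi4 hi_r,
      intervalIntegral.integral_const_mul, intervalIntegral.integral_const_mul]
    rw [hJ2_def, hJ4_def, hRn_def]
    ring
  rw [hIval]
  have hAlg : c0 p * (t * J2 + ((m/2) * t ^ 2) * J4 + Rn)
      - (t / P + 3 * t ^ 2 / (2 * P * (P + 2)) * m) = c0 p * Rn := by
    have hterm1 : c0 p * (t * J2) = t / P := by
      rw [show c0 p * (t * J2) = t * (c0 p * J2) by ring, e1]; ring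
    have hterm2 : c0 p * (((m/2) * t ^ 2) * J4) = 3 * t ^ 2 / (2*P*(P+2)) * m := by
      rw [show c0 p * (((m/2) * t ^ 2) * J4) = ((m/2) * t ^ 2) * (c0 p * J4) by ring, e2]
      field_simp
    calc c0 p * (t * J2 + ((m/2) * t ^ 2) * J4 + Rn) - (t / P + 3 * t ^ 2 / (2*P*(P+2)) * m)
        = (c0 p * (t * J2) - t / P)
          + (c0 p * (((m/2) * t ^ 2) * J4) - 3 * t ^ 2 / (2*P*(P+2)) * m) + c0 p * Rn := by
          ring
    _ = c0 p * Rn := by rw [hterm1, hterm2]; ring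
  rw [hAlg]
  have hRbound : ‖Rn‖ ≤ ε' * t ^ 2 * J4 := by
    have hbnd := intervalIntegral.norm_integral_le_abs_of_norm_le
      (μ := volume) (f := fun s => W a s * r (t * s ^ 2))
      (g := fun s => ε' * t ^ 2 * (s ^ 4 * W a s)) (a := (-1:ℝ)) (b := 1)
      ?_ ((pow_mul_W_int ha 4).const_mul _)
    · rw [intervalIntegral.integral_const_mul, ← hJ4_def, ← hRn_def] at hbnd
      refine hbnd.trans ?_
      rw [abs_of_nonneg (by positivity)]
    · have hmem := ae_restrict_mem (μ := volume) (measurableSet_uIoc (a := (-1:ℝ)) (b := 1))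
      filter_upwards [hmem] with s hs
      obtain ⟨hl, hr'⟩ := mem_of_uIoc hs
      have hw := W_nonneg a hl.le hr'
      have hb := hδ' _ (hts s hs)
      calc ‖W a s * r (t * s ^ 2)‖ = W a s * |r (t * s ^ 2)| := by
            rw [norm_mul, Real.norm_of_nonneg hw, Real.norm_eq_abs]
      _ ≤ W a s * (ε' * (t * s ^ 2) ^ 2) := mul_le_mul_of_nonneg_left hb hw
      _ = ε' * t ^ 2 * (s ^ 4 * W a s) := by ring
  calc ‖c0 p * Rn‖ = c0 p * ‖Rn‖ := by
        rw [norm_mul, Real.norm_of_nonneg hc0pos.le]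
  _ ≤ c0 p * (ε' * t ^ 2 * J4) := mul_le_mul_of_nonneg_left hRbound hc0pos.le
  _ = c * ‖t ^ 2‖ := by
      rw [Real.norm_of_nonneg (sq_nonneg t), hε']
      field_simp

end
end

section
/- Fix an integer p ≥ 2, f ∈ 𝓕, and a sequence (κ_n) of nonzero real numbers with κ_n → 0. Define E_{nk} := c_p ∫_{−1}^{1} (1−s²)^{(p−3)/2} ( log f(κ_n s²) )^k ds for k = 1, 2. Then, as n → ∞, the variance V_n := E_{n2} − E_{n1}² satisfies V_n = 2 κ_n² (p−1) / ( p² (p+2) ) + o(κ_n²). -/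
open MeasureTheory Filter Real Asymptotics
open scoped ENNReal NNReal Topology
open Set intervalIntegral

noncomputable section

/-- `E_{nk} = c_p ∫_{-1}^1 (1-s²)^{(p-3)/2} (log f(κ s²))^k ds`. -/
def Emom (p : ℕ) (f : ℝ → ℝ) (κ : ℝ) (k : ℕ) : ℝ :=
  c0 p * ∫ s in (-1:ℝ)..1, (1 - s ^ 2) ^ (((p : ℝ) - 3) / 2) * (Real.log (f (κ * s ^ 2))) ^ k

lemma weight_integrable_half {b : ℝ} (hb : -1 < b) :
    IntervalIntegrable (fun s : ℝ => (1 - s^2) ^ b) volume 0 1 := by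
  have hmeas : Measurable (fun s : ℝ => (1 - s^2) ^ b) := by fun_prop
  set M : ℝ := max 1 ((2:ℝ) ^ b) with hM
  have hM1 : (1:ℝ) ≤ M := le_max_left _ _
  have h1 : IntervalIntegrable (fun s : ℝ => (1 - s) ^ b) volume 0 1 := by
    have := (intervalIntegral.intervalIntegrable_rpow' (a := 0) (b := 1) hb).comp_sub_left 1
    simpa using this.symm
  have h1' : IntervalIntegrable (fun s : ℝ => M * (1 - s) ^ b) volume 0 1 := h1.const_mul M
  apply h1'.mono_fun hmeas.aestronglyMeasurable
  rw [Filter.EventuallyLE, ae_restrict_iff' measurableSet_uIoc]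
  filter_upwards with s hs
  rw [Set.uIoc_of_le (by norm_num : (0:ℝ) ≤ 1)] at hs
  obtain ⟨hs0, hs1⟩ := hs
  have h1s : 0 ≤ 1 - s := by linarith
  have h1s2 : 0 ≤ 1 - s^2 := by nlinarith
  have heq : 1 - s^2 = (1 - s) * (1 + s) := by ring
  rw [Real.norm_eq_abs, Real.norm_eq_abs, abs_of_nonneg (Real.rpow_nonneg h1s2 b),
    abs_of_nonneg (by positivity : (0:ℝ) ≤ M * (1-s)^b), heq,
    Real.mul_rpow h1s (by linarith : (0:ℝ) ≤ 1 + s), mul_comm M ((1-s)^b)]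
  gcongr ?_ * ?_
  · rcases le_or_gt 0 b with hb0 | hb0
    · calc (1 + s) ^ b ≤ (2:ℝ) ^ b :=
            Real.rpow_le_rpow (by linarith) (by linarith) hb0
        _ ≤ M := le_max_right _ _
    · calc (1 + s) ^ b ≤ 1 :=
            Real.rpow_le_one_of_one_le_of_nonpos (by linarith) hb0.le
        _ ≤ M := hM1

lemma weight_integrable {b : ℝ} (hb : -1 < b) :
    IntervalIntegrable (fun s : ℝ => (1 - s^2) ^ b) volume (-1) 1 := by
  have h1 := weight_integrable_half hb
  have h2 : IntervalIntegrable (fun s : ℝ => (1 - s^2) ^ b) volume (-1) 0 := by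
    have := (IntervalIntegrable.iff_comp_neg enorm_ne_top).mp h1
    simp only [neg_neg, neg_zero] at this
    have h3 : (fun x : ℝ => (1 - (-x)^2) ^ b) = (fun x : ℝ => (1 - x^2) ^ b) := by
      funext x; rw [neg_pow]; norm_num
    rw [h3] at this
    exact this.symm
  exact h2.trans h1

/-- integrability of weight times bounded measurable function -/

lemma weight_mul_integrable {b : ℝ} (hb : -1 < b) {φ : ℝ → ℝ} {B : ℝ}
    (hφm : AEStronglyMeasurable φ (volume.restrict (Set.uIoc (-1:ℝ) 1)))
    (hφ : ∀ s ∈ Set.uIoc (-1:ℝ) 1, |φ s| ≤ B) :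
    IntervalIntegrable (fun s : ℝ => (1 - s^2) ^ b * φ s) volume (-1) 1 := by
  have hw := weight_integrable hb
  have hwm : Measurable (fun s : ℝ => (1 - s^2) ^ b) := by fun_prop
  apply ((hw.const_mul B).mono_fun (hwm.aestronglyMeasurable.mul hφm))
  rw [Filter.EventuallyLE, ae_restrict_iff' measurableSet_uIoc]
  filter_upwards with s hs
  have h1s2 : 0 ≤ 1 - s^2 := by
    rw [Set.uIoc_of_le (by norm_num : (-1:ℝ) ≤ 1)] at hs
    obtain ⟨hs0, hs1⟩ := hs; nlinarith
  have hwpos : 0 ≤ (1 - s^2) ^ b := Real.rpow_nonneg h1s2 b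
  simp only [Pi.mul_apply, Real.norm_eq_abs, abs_mul, abs_of_nonneg hwpos]
  calc (1-s^2)^b * |φ s| ≤ (1-s^2)^b * |B| := by
        apply mul_le_mul_of_nonneg_left ((hφ s hs).trans (le_abs_self B)) hwpos
    _ = |B| * (1-s^2)^b := mul_comm _ _

lemma pow_abs_le_one {s : ℝ} (hs : s ∈ Set.uIoc (-1:ℝ) 1) (k : ℕ) : |s ^ k| ≤ 1 := by
  rw [Set.uIoc_of_le (by norm_num : (-1:ℝ) ≤ 1)] at hs
  rw [abs_pow]
  exact pow_le_one₀ (abs_nonneg s) (abs_le.mpr ⟨hs.1.le, hs.2⟩)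

lemma weight_pow_integrable {b : ℝ} (hb : -1 < b) (k : ℕ) :
    IntervalIntegrable (fun s : ℝ => (1 - s^2) ^ b * s ^ k) volume (-1) 1 :=
  weight_mul_integrable hb ((measurable_id.pow_const k).aestronglyMeasurable)
    (fun s hs => pow_abs_le_one hs k)

lemma moment_rec {b : ℝ} (hb : -1 < b) (j : ℕ) :
    (2*b + 2*(j:ℝ) + 3) * ∫ s in (-1:ℝ)..1, (1-s^2)^b * s^(2*j+2)
      = (2*(j:ℝ)+1) * ∫ s in (-1:ℝ)..1, (1-s^2)^b * s^(2*j) := by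
  have hb1 : (0:ℝ) < b + 1 := by linarith
  set F : ℝ → ℝ := fun s => (1-s^2)^(b+1) * s^(2*j+1) with hF
  set G : ℝ → ℝ := fun s =>
    ((b+1) * (-2)) * ((1-s^2)^b * s^(2*j+2)) + ((2*(j:ℝ)+1)) * ((1-s^2)^(b+1) * s^(2*j)) with hG
  -- derivative
  have hderiv : ∀ s ∈ Set.Ioo (-1:ℝ) 1, HasDerivAt F (G s) s := by
    intro s hs
    have hpos : (0:ℝ) < 1 - s^2 := by nlinarith [hs.1, hs.2]
    have h1 : HasDerivAt (fun s : ℝ => 1 - s^2) (-(2*s)) s := by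
      simpa using (hasDerivAt_pow 2 s).const_sub 1
    have h2 : HasDerivAt (fun s : ℝ => (1-s^2)^(b+1)) ((-(2*s)) * (b+1) * (1-s^2)^b) s := by
      have := h1.rpow_const (p := b+1) (Or.inl hpos.ne')
      simpa using this
    have h3 : HasDerivAt (fun s : ℝ => s^(2*j+1)) ((2*(j:ℝ)+1) * s^(2*j)) s := by
      have := hasDerivAt_pow (2*j+1) s
      simpa [Nat.add_sub_cancel] using this
    have := h2.mul h3
    convert this using 1
    show ((b+1) * (-2)) * ((1-s^2)^b * s^(2*j+2)) + ((2*(j:ℝ)+1)) * ((1-s^2)^(b+1) * s^(2*j)) = _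
    ring
    all_goals rfl
  -- continuity of F on Icc
  have hcont : ContinuousOn F (Set.Icc (-1:ℝ) 1) := by
    apply Continuous.continuousOn
    exact ((continuous_const.sub (continuous_pow 2)).rpow_const
      (fun x => Or.inr hb1.le)).mul (continuous_pow _)
  -- integrability of G
  have hi2 : IntervalIntegrable (fun s : ℝ => (1-s^2)^b * s^(2*j+2)) volume (-1) 1 :=
    weight_pow_integrable hb _
  have hi0 : IntervalIntegrable (fun s : ℝ => (1-s^2)^b * s^(2*j)) volume (-1) 1 :=
    weight_pow_integrable hb _
  have hi2' : IntervalIntegrable (fun s : ℝ => (1-s^2)^(b+1) * s^(2*j)) volume (-1) 1 :=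
    weight_pow_integrable (by linarith) _
  have hiG : IntervalIntegrable G volume (-1) 1 :=
    (hi2.const_mul _).add (hi2'.const_mul _)
  -- FTC
  have hFTC : ∫ s in (-1:ℝ)..1, G s = F 1 - F (-1) := by
    apply intervalIntegral.integral_eq_sub_of_hasDeriv_right_of_le (by norm_num) hcont
      (fun x hx => (hderiv x hx).hasDerivWithinAt) hiG
  have hF1 : F 1 = 0 := by
    simp only [hF]
    norm_num
    exact Real.zero_rpow (by linarith)
  have hFm1 : F (-1) = 0 := by
    show (1 - (-1:ℝ)^2)^(b+1) * (-1:ℝ)^(2*j+1) = 0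
    norm_num [Real.zero_rpow (show b+1 ≠ 0 by linarith)]
  rw [hF1, hFm1, sub_zero] at hFTC
  -- split the integral of G
  have hsplit : ∫ s in (-1:ℝ)..1, G s
      = ((b+1) * (-2)) * (∫ s in (-1:ℝ)..1, (1-s^2)^b * s^(2*j+2))
        + (2*(j:ℝ)+1) * ∫ s in (-1:ℝ)..1, (1-s^2)^(b+1) * s^(2*j) := by
    rw [intervalIntegral.integral_add (hi2.const_mul _) (hi2'.const_mul _),
      intervalIntegral.integral_const_mul, intervalIntegral.integral_const_mul]
  -- rewrite (1-s²)^{b+1} = (1-s²)^b (1-s²)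
  have hpointwise : ∫ s in (-1:ℝ)..1, (1-s^2)^(b+1) * s^(2*j)
      = (∫ s in (-1:ℝ)..1, (1-s^2)^b * s^(2*j)) - ∫ s in (-1:ℝ)..1, (1-s^2)^b * s^(2*j+2) := by
    rw [← intervalIntegral.integral_sub hi0 hi2]
    apply intervalIntegral.integral_congr
    intro s hs
    dsimp only
    rw [Set.uIcc_of_le (by norm_num : (-1:ℝ) ≤ 1)] at hs
    have h1s2 : 0 ≤ 1 - s^2 := by nlinarith [hs.1, hs.2]
    rcases eq_or_lt_of_le h1s2 with heq | hlt
    · rw [← heq, Real.zero_rpow (by linarith : b + 1 ≠ 0)]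
      have hs2 : s^2 = 1 := by linarith
      have h24 : s^(2*j+2) = s^(2*j) := by
        rw [pow_add, hs2, pow_mul, hs2]; norm_num
      rw [h24]; ring
    · rw [Real.rpow_add hlt, Real.rpow_one]
      ring
  rw [hsplit, hpointwise] at hFTC
  linarith [hFTC]

lemma log_quad_bound (f : ℝ → ℝ) (hf_pos : ∀ x, 0 < f x)
    (hf_diff : ∀ᶠ x in nhds (0:ℝ), DifferentiableAt ℝ f x)
    (hf_diff2 : DifferentiableAt ℝ (deriv f) 0)
    (hf0 : f 0 = 1) (hf'0 : deriv f 0 = 1) :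
    ∃ δ : ℝ, 0 < δ ∧ ∃ C : ℝ, 0 < C ∧ ∀ x : ℝ, |x| ≤ δ → |Real.log (f x) - x| ≤ C * x^2 := by
  obtain ⟨δ0, hδ0, hdiff⟩ := Metric.eventually_nhds_iff.mp hf_diff
  -- quotient function
  set q : ℝ → ℝ := fun x => deriv f x / f x with hq
  have hg : ∀ x : ℝ, dist x 0 < δ0 → HasDerivAt (fun y => Real.log (f y)) (q x) x := by
    intro x hx
    exact ((hdiff hx).hasDerivAt).log (hf_pos x).ne'
  have hf_d0 : DifferentiableAt ℝ f 0 := hdiff (by simpa using hδ0)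
  have hq_diff : DifferentiableAt ℝ q 0 :=
    hf_diff2.div hf_d0 (by rw [hf0]; norm_num)
  have hq0 : q 0 = 1 := by rw [hq]; simp [hf0, hf'0]
  -- linear bound on q near 0
  have hlin := (hq_diff.hasDerivAt).isLittleO
  set D := deriv q 0 with hD
  have hev : ∀ᶠ x in nhds (0:ℝ), ‖q x - 1‖ ≤ (1 + |D|) * |x| := by
    have h1 := (hlin.bound (by norm_num : (0:ℝ) < 1))
    filter_upwards [h1] with x hx
    have : ‖q x - q 0 - (x - 0) • D‖ ≤ 1 * ‖x - 0‖ := by simpa using hx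
    rw [hq0] at this
    simp only [sub_zero, smul_eq_mul, one_mul, Real.norm_eq_abs] at this ⊢
    calc |q x - 1| = |(q x - 1 - x * D) + x * D| := by ring_nf
      _ ≤ |q x - 1 - x * D| + |x * D| := abs_add_le _ _
      _ ≤ |x| + |x| * |D| := by rw [abs_mul]; exact add_le_add this (le_refl _)
      _ = (1 + |D|) * |x| := by ring
  obtain ⟨δ1, hδ1, hq_bound⟩ := Metric.eventually_nhds_iff.mp hev
  refine ⟨min δ0 δ1 / 2, by positivity, 1 + |D|, by positivity, ?_⟩
  intro x hx
  set δ := min δ0 δ1 / 2 with hδdef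
  -- MVT on uIcc 0 x
  have key : ∀ t ∈ Set.uIcc (0:ℝ) x, |t| ≤ |x| := by
    intro t ht
    rcases Set.mem_uIcc.mp ht with ⟨h1, h2⟩ | ⟨h1, h2⟩
    · rw [abs_of_nonneg h1]; exact h2.trans (le_abs_self x)
    · rw [abs_of_nonpos h2]; calc -t ≤ -x := by linarith
        _ ≤ |x| := neg_le_abs x
  have hm : 0 < min δ0 δ1 := lt_min hδ0 hδ1
  have hδlt : δ < min δ0 δ1 := by rw [hδdef]; exact half_lt_self hm
  have hsmall : ∀ t ∈ Set.uIcc (0:ℝ) x, dist t 0 < δ0 ∧ dist t 0 < δ1 := by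
    intro t ht
    have h1 := key t ht
    rw [Real.dist_eq, sub_zero]
    constructor
    · exact lt_of_le_of_lt (h1.trans hx) (hδlt.trans_le (min_le_left _ _))
    · exact lt_of_le_of_lt (h1.trans hx) (hδlt.trans_le (min_le_right _ _))
  have hmvt : ‖(Real.log (f x) - x) - (Real.log (f 0) - 0)‖ ≤ ((1 + |D|) * |x|) * ‖x - 0‖ := by
    apply Convex.norm_image_sub_le_of_norm_hasDerivWithin_le
      (f := fun t => Real.log (f t) - t) (f' := fun t => q t - 1) (s := Set.uIcc 0 x)
    · intro t ht
      exact (((hg t (hsmall t ht).1).sub (hasDerivAt_id t))).hasDerivWithinAt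
    · intro t ht
      rw [Real.norm_eq_abs]
      calc |q t - 1| ≤ (1 + |D|) * |t| := hq_bound (hsmall t ht).2
        _ ≤ (1 + |D|) * |x| := by
            apply mul_le_mul_of_nonneg_left (key t ht) (by positivity)
    · exact convex_uIcc _ _
    · exact Set.left_mem_uIcc
    · exact Set.right_mem_uIcc
  rw [hf0, Real.log_one] at hmvt
  simp only [sub_zero, Real.norm_eq_abs] at hmvt
  calc |Real.log (f x) - x| ≤ (1 + |D|) * |x| * |x| := hmvt
    _ = (1 + |D|) * x^2 := by rw [mul_assoc, ← abs_mul, ← sq, abs_sq]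

set_option maxHeartbeats 2000000 in
lemma key_estimate (p : ℕ) (hp : 2 ≤ p) (f : ℝ → ℝ)
    (hf_pos : ∀ x, 0 < f x) (hf_mono : Monotone f)
    (δ C : ℝ) (hδ : 0 < δ) (hC : 0 < C)
    (hquad : ∀ x : ℝ, |x| ≤ δ → |Real.log (f x) - x| ≤ C * x^2)
    (κ : ℝ) (hκ : |κ| ≤ δ) :
    |(Emom p f κ 2 - (Emom p f κ 1) ^ 2)
        - 2 * κ ^ 2 * ((p:ℝ) - 1) / ((p:ℝ) ^ 2 * ((p:ℝ) + 2))|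
      ≤ (2 * C * (C * δ + 2)) * |κ|^3 := by
  have hp2 : (2:ℝ) ≤ (p:ℝ) := by exact_mod_cast hp
  have hp0 : (0:ℝ) < (p:ℝ) := by linarith
  set b : ℝ := ((p:ℝ) - 3) / 2 with hbdef
  have hb : -1 < b := by rw [hbdef]; linarith
  set A : ℝ := ∫ s in (-1:ℝ)..1, (1 - s^2) ^ b with hA
  have hApos : 0 < A := by
    rw [hA]
    apply intervalIntegral.intervalIntegral_pos_of_pos_on
    · simpa using weight_pow_integrable hb 0
    · intro s hs
      exact Real.rpow_pos_of_pos (by nlinarith [hs.1, hs.2]) b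
    · norm_num
  -- second moment
  have hI2 : ∫ s in (-1:ℝ)..1, (1 - s^2)^b * s^2 = A / (p:ℝ) := by
    have h := moment_rec hb 0
    norm_num at h
    have hb3 : 2*b + 3 = (p:ℝ) := by rw [hbdef]; ring
    rw [hb3, ← hA] at h
    rw [eq_div_iff hp0.ne']
    linarith
  -- fourth moment
  have hI4 : ∫ s in (-1:ℝ)..1, (1 - s^2)^b * s^4 = 3 * A / ((p:ℝ) * ((p:ℝ)+2)) := by
    have h := moment_rec hb 1
    norm_num at h
    have hb5 : 2*b + 2 + 3 = (p:ℝ) + 2 := by rw [hbdef]; ring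
    rw [hb5, hI2] at h
    rw [eq_div_iff (by positivity)]
    field_simp at h
    rw [show (∫ s in (-1:ℝ)..1, s^4 * (1 - s^2)^b) = ∫ s in (-1:ℝ)..1, (1 - s^2)^b * s^4 from
      intervalIntegral.integral_congr (fun s _ => mul_comm _ _)] at h
    linear_combination h
  -- measurability of the log factor
  have hg_m : ∀ k : ℕ, AEStronglyMeasurable (fun s : ℝ => (Real.log (f (κ * s^2)))^k)
      (volume.restrict (Set.uIoc (-1:ℝ) 1)) := by
    intro k
    exact ((Real.measurable_log.comp (hf_mono.measurable.comp
      (measurable_const.mul (measurable_id.pow_const 2)))).pow_const k).aestronglyMeasurable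
  -- uniform bound for the log factor
  set B : ℝ := max |Real.log (f |κ|)| |Real.log (f (-|κ|))| with hB
  have hB0 : 0 ≤ B := le_trans (abs_nonneg _) (le_max_left _ _)
  have hgB : ∀ s ∈ Set.uIoc (-1:ℝ) 1, |Real.log (f (κ * s^2))| ≤ B := by
    intro s hs
    have hs2 : s^2 ≤ 1 := by
      have := pow_abs_le_one hs 2
      rw [abs_of_nonneg (sq_nonneg s)] at this; exact this
    have hs2' : (0:ℝ) ≤ s^2 := sq_nonneg s
    have hub : κ * s^2 ≤ |κ| := by
      calc κ * s^2 ≤ |κ| * s^2 := by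
            apply mul_le_mul_of_nonneg_right (le_abs_self κ) hs2'
        _ ≤ |κ| * 1 := by apply mul_le_mul_of_nonneg_left hs2 (abs_nonneg κ)
        _ = |κ| := mul_one _
    have hlb : -|κ| ≤ κ * s^2 := by
      calc -|κ| = -|κ| * 1 := by ring
        _ ≤ -|κ| * s^2 := by
            rcases le_or_gt 0 κ with h | h
            · nlinarith [abs_nonneg κ]
            · nlinarith [abs_nonneg κ]
        _ ≤ κ * s^2 := by nlinarith [neg_abs_le κ]
    have h1 : Real.log (f (κ * s^2)) ≤ Real.log (f |κ|) :=
      Real.log_le_log (hf_pos _) (hf_mono hub)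
    have h2 : Real.log (f (-|κ|)) ≤ Real.log (f (κ * s^2)) :=
      Real.log_le_log (hf_pos _) (hf_mono hlb)
    rw [abs_le]
    constructor
    · calc -B ≤ -|Real.log (f (-|κ|))| := neg_le_neg (le_max_right _ _)
        _ ≤ Real.log (f (-|κ|)) := neg_abs_le _
        _ ≤ _ := h2
    · calc Real.log (f (κ * s^2)) ≤ Real.log (f |κ|) := h1
        _ ≤ |Real.log (f |κ|)| := le_abs_self _
        _ ≤ B := le_max_left _ _
  -- integrability
  have hIgk : ∀ k : ℕ, IntervalIntegrable
      (fun s : ℝ => (1 - s^2)^b * (Real.log (f (κ * s^2)))^k) volume (-1) 1 := by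
    intro k
    apply weight_mul_integrable hb (hg_m k)
    intro s hs
    rw [abs_pow]
    calc |Real.log (f (κ * s^2))|^k ≤ B^k := pow_le_pow_left₀ (abs_nonneg _) (hgB s hs) k
      _ ≤ B^k := le_refl _
  -- pointwise quadratic control
  have hqd : ∀ s ∈ Set.uIoc (-1:ℝ) 1, |Real.log (f (κ * s^2)) - κ * s^2| ≤ C * κ^2 := by
    intro s hs
    have hs2 : s^2 ≤ 1 := by
      have := pow_abs_le_one hs 2
      rw [abs_of_nonneg (sq_nonneg s)] at this; exact this
    have hs2' : (0:ℝ) ≤ s^2 := sq_nonneg s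
    have hxs : |κ * s^2| ≤ δ := by
      rw [abs_mul, abs_of_nonneg hs2']
      calc |κ| * s^2 ≤ |κ| * 1 := by
            apply mul_le_mul_of_nonneg_left hs2 (abs_nonneg κ)
        _ = |κ| := mul_one _
        _ ≤ δ := hκ
    calc |Real.log (f (κ * s^2)) - κ * s^2| ≤ C * (κ * s^2)^2 := hquad _ hxs
      _ ≤ C * κ^2 := by
            have hs4 : s^2 * s^2 ≤ 1 := by nlinarith
            nlinarith [mul_le_mul_of_nonneg_left hs4 (mul_nonneg hC.le (sq_nonneg κ))]
  -- rewrite Emom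
  have hc0 : c0 p = 1/A := by rw [c0, ← hbdef, ← hA]
  have hIg1 : IntervalIntegrable
      (fun s : ℝ => (1 - s^2)^b * Real.log (f (κ * s^2))) volume (-1) 1 := by
    simpa using hIgk 1
  have hIg2 : IntervalIntegrable
      (fun s : ℝ => (1 - s^2)^b * (Real.log (f (κ * s^2)))^2) volume (-1) 1 := hIgk 2
  have hIw : IntervalIntegrable (fun s : ℝ => (1 - s^2)^b) volume (-1) 1 := by
    simpa using weight_pow_integrable hb 0
  have hE1 : Emom p f κ 1 = (1/A) * ∫ s in (-1:ℝ)..1, (1 - s^2)^b * Real.log (f (κ * s^2)) := by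
    rw [Emom, hc0, ← hbdef]
    simp only [pow_one]
  have hE2 : Emom p f κ 2
      = (1/A) * ∫ s in (-1:ℝ)..1, (1 - s^2)^b * (Real.log (f (κ * s^2)))^2 := by
    rw [Emom, hc0, ← hbdef]
  have hwnn : ∀ s ∈ Set.uIoc (-1:ℝ) 1, (0:ℝ) ≤ 1 - s^2 := by
    intro s hs
    have := pow_abs_le_one hs 2
    rw [abs_of_nonneg (sq_nonneg s)] at this
    linarith
  -- first moment estimate
  have key1 : |Emom p f κ 1 - κ/(p:ℝ)| ≤ C * κ^2 := by
    have hsub : Emom p f κ 1 - κ/(p:ℝ)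
        = (1/A) * ∫ s in (-1:ℝ)..1,
            ((1 - s^2)^b * Real.log (f (κ * s^2)) - κ * ((1 - s^2)^b * s^2)) := by
      rw [intervalIntegral.integral_sub hIg1 ((weight_pow_integrable hb 2).const_mul κ),
        intervalIntegral.integral_const_mul, hI2, hE1]
      field_simp
      have hcm : ∀ x : ℝ, κ * x^2 = x^2 * κ := fun x => mul_comm _ _
      simp only [hcm]
      ring
    rw [hsub, abs_mul, abs_of_nonneg (by positivity : (0:ℝ) ≤ 1/A)]
    have hbound : ‖∫ s in (-1:ℝ)..1,
        ((1 - s^2)^b * Real.log (f (κ * s^2)) - κ * ((1 - s^2)^b * s^2))‖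
        ≤ |∫ s in (-1:ℝ)..1, (C * κ^2) * (1 - s^2)^b| := by
      apply intervalIntegral.norm_integral_le_abs_of_norm_le _ (hIw.const_mul _)
      rw [ae_restrict_iff' measurableSet_uIoc]
      filter_upwards with s hs
      have hfac : (1 - s^2)^b * Real.log (f (κ * s^2)) - κ * ((1 - s^2)^b * s^2)
          = (1 - s^2)^b * (Real.log (f (κ * s^2)) - κ * s^2) := by ring
      rw [Real.norm_eq_abs, hfac, abs_mul,
        abs_of_nonneg (Real.rpow_nonneg (hwnn s hs) b)]
      calc (1 - s^2)^b * |Real.log (f (κ * s^2)) - κ * s^2|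
          ≤ (1 - s^2)^b * (C * κ^2) := by
            apply mul_le_mul_of_nonneg_left (hqd s hs) (Real.rpow_nonneg (hwnn s hs) b)
        _ = (C * κ^2) * (1 - s^2)^b := mul_comm _ _
    rw [intervalIntegral.integral_const_mul, ← hA] at hbound
    rw [abs_of_nonneg (by positivity : (0:ℝ) ≤ C * κ^2 * A)] at hbound
    rw [Real.norm_eq_abs] at hbound
    calc 1/A * |∫ s in (-1:ℝ)..1,
          ((1 - s^2)^b * Real.log (f (κ * s^2)) - κ * ((1 - s^2)^b * s^2))|
        ≤ 1/A * (C * κ^2 * A) := by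
          apply mul_le_mul_of_nonneg_left hbound (by positivity)
      _ = C * κ^2 := by
          rw [mul_comm ((1:ℝ)/A), mul_one_div, mul_div_assoc, div_self hApos.ne', mul_one]
  -- second moment estimate
  have key2 : |Emom p f κ 2 - κ^2 * (3/((p:ℝ)*((p:ℝ)+2)))| ≤ C * κ^2 * (C * κ^2 + 2*|κ|) := by
    have hsub : Emom p f κ 2 - κ^2 * (3/((p:ℝ)*((p:ℝ)+2)))
        = (1/A) * ∫ s in (-1:ℝ)..1,
            ((1 - s^2)^b * (Real.log (f (κ * s^2)))^2 - κ^2 * ((1 - s^2)^b * s^4)) := by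
      rw [intervalIntegral.integral_sub hIg2 ((weight_pow_integrable hb 4).const_mul (κ^2)),
        intervalIntegral.integral_const_mul, hI4, hE2]
      field_simp
      have hcm : ∀ x : ℝ, κ * x^2 = x^2 * κ := fun x => mul_comm _ _
      simp only [hcm]
      ring
    rw [hsub, abs_mul, abs_of_nonneg (by positivity : (0:ℝ) ≤ 1/A)]
    have hbound : ‖∫ s in (-1:ℝ)..1,
        ((1 - s^2)^b * (Real.log (f (κ * s^2)))^2 - κ^2 * ((1 - s^2)^b * s^4))‖
        ≤ |∫ s in (-1:ℝ)..1, (C * κ^2 * (C * κ^2 + 2*|κ|)) * (1 - s^2)^b| := by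
      apply intervalIntegral.norm_integral_le_abs_of_norm_le _ (hIw.const_mul _)
      rw [ae_restrict_iff' measurableSet_uIoc]
      filter_upwards with s hs
      have hs2 : s^2 ≤ 1 := by
        have := pow_abs_le_one hs 2
        rw [abs_of_nonneg (sq_nonneg s)] at this; exact this
      have hfac : (1 - s^2)^b * (Real.log (f (κ * s^2)))^2 - κ^2 * ((1 - s^2)^b * s^4)
          = (1 - s^2)^b * ((Real.log (f (κ * s^2)) - κ * s^2)
              * (Real.log (f (κ * s^2)) + κ * s^2)) := by ring
      rw [Real.norm_eq_abs, hfac, abs_mul,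
        abs_of_nonneg (Real.rpow_nonneg (hwnn s hs) b), abs_mul]
      have hplus : |Real.log (f (κ * s^2)) + κ * s^2| ≤ C * κ^2 + 2*|κ| := by
        have hks : |κ * s^2| ≤ |κ| := by
          rw [abs_mul, abs_of_nonneg (sq_nonneg s)]
          calc |κ| * s^2 ≤ |κ| * 1 := by
                apply mul_le_mul_of_nonneg_left hs2 (abs_nonneg κ)
            _ = |κ| := mul_one _
        calc |Real.log (f (κ * s^2)) + κ * s^2|
            = |(Real.log (f (κ * s^2)) - κ * s^2) + 2 * (κ * s^2)| := by ring_nf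
          _ ≤ |Real.log (f (κ * s^2)) - κ * s^2| + |2 * (κ * s^2)| := abs_add_le _ _
          _ ≤ C * κ^2 + 2*|κ| := by
              rw [abs_mul]
              have := hqd s hs
              have h2 : |(2:ℝ)| * |κ * s^2| ≤ 2 * |κ| := by
                rw [abs_two]
                apply mul_le_mul_of_nonneg_left hks (by norm_num)
              linarith
      calc (1 - s^2)^b * (|Real.log (f (κ * s^2)) - κ * s^2|
              * |Real.log (f (κ * s^2)) + κ * s^2|)
          ≤ (1 - s^2)^b * ((C * κ^2) * (C * κ^2 + 2*|κ|)) := by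
            apply mul_le_mul_of_nonneg_left _ (Real.rpow_nonneg (hwnn s hs) b)
            apply mul_le_mul (hqd s hs) hplus (abs_nonneg _) (by positivity)
        _ = (C * κ^2 * (C * κ^2 + 2*|κ|)) * (1 - s^2)^b := by ring
    rw [intervalIntegral.integral_const_mul, ← hA] at hbound
    rw [abs_of_nonneg (by positivity : (0:ℝ) ≤ C * κ^2 * (C * κ^2 + 2*|κ|) * A)] at hbound
    rw [Real.norm_eq_abs] at hbound
    calc 1/A * |∫ s in (-1:ℝ)..1,
          ((1 - s^2)^b * (Real.log (f (κ * s^2)))^2 - κ^2 * ((1 - s^2)^b * s^4))|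
        ≤ 1/A * (C * κ^2 * (C * κ^2 + 2*|κ|) * A) := by
          apply mul_le_mul_of_nonneg_left hbound (by positivity)
      _ = C * κ^2 * (C * κ^2 + 2*|κ|) := by
          rw [mul_comm ((1:ℝ)/A), mul_one_div, mul_div_assoc, div_self hApos.ne', mul_one]
  -- conclusion
  set E1 := Emom p f κ 1
  set E2 := Emom p f κ 2
  have h3 : |E1 + κ/(p:ℝ)| ≤ C * κ^2 + 2*|κ| := by
    have heq : E1 + κ/(p:ℝ) = (E1 - κ/(p:ℝ)) + 2*(κ/(p:ℝ)) := by ring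
    have habs : |2*(κ/(p:ℝ))| ≤ 2*|κ| := by
      rw [abs_mul, abs_two, abs_div, abs_of_nonneg hp0.le]
      have : |κ|/(p:ℝ) ≤ |κ| := by
        rw [div_le_iff₀ hp0]
        nlinarith [abs_nonneg κ]
      linarith
    calc |E1 + κ/(p:ℝ)| = |(E1 - κ/(p:ℝ)) + 2*(κ/(p:ℝ))| := by rw [← heq]
      _ ≤ |E1 - κ/(p:ℝ)| + |2*(κ/(p:ℝ))| := abs_add_le _ _
      _ ≤ C * κ^2 + 2*|κ| := by linarith [key1]
  have hfactor : E2 - E1^2 - 2*κ^2*((p:ℝ)-1)/((p:ℝ)^2*((p:ℝ)+2))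
      = (E2 - κ^2 * (3/((p:ℝ)*((p:ℝ)+2)))) - (E1 - κ/(p:ℝ))*(E1 + κ/(p:ℝ)) := by
    have hpne : (p:ℝ) ≠ 0 := hp0.ne'
    have hp2ne : (p:ℝ) + 2 ≠ 0 := by linarith
    field_simp
    ring
  rw [hfactor]
  have habs2 : |(E1 - κ/(p:ℝ))*(E1 + κ/(p:ℝ))| ≤ (C * κ^2) * (C * κ^2 + 2*|κ|) := by
    rw [abs_mul]
    apply mul_le_mul key1 h3 (abs_nonneg _) (by positivity)
  have htri : |(E2 - κ^2 * (3/((p:ℝ)*((p:ℝ)+2)))) - (E1 - κ/(p:ℝ))*(E1 + κ/(p:ℝ))|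
      ≤ C * κ^2 * (C * κ^2 + 2*|κ|) + (C * κ^2) * (C * κ^2 + 2*|κ|) :=
    (abs_sub _ _).trans (add_le_add key2 habs2)
  apply htri.trans
  have hk2 : κ^2 = |κ|^2 := (sq_abs κ).symm
  rw [hk2]
  have hknn : (0:ℝ) ≤ |κ| := abs_nonneg κ
  nlinarith [mul_le_mul_of_nonneg_left hκ (mul_nonneg hC.le (pow_nonneg hknn 3)),
    pow_nonneg hknn 3, sq_nonneg (|κ|)]

/-- expansion of the variance `V_n = E_{n2} - E_{n1}²`.
For `f ∈ 𝓕` and nonzero `κ_n → 0`,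
`V_n = 2κ_n²(p-1)/(p²(p+2)) + o(κ_n²)`. -/
theorem variance_log_density_expansion
    (p : ℕ) (hp : 2 ≤ p)
    (f : ℝ → ℝ) (hf_pos : ∀ x, 0 < f x) (hf_mono : Monotone f)
    (hf_diff : ∀ᶠ x in 𝓝 (0:ℝ), DifferentiableAt ℝ f x)
    (hf_diff2 : DifferentiableAt ℝ (deriv f) 0)
    (hf0 : f 0 = 1) (hf'0 : deriv f 0 = 1)
    (κ : ℕ → ℝ) (hκ0 : ∀ n, κ n ≠ 0) (hκ : Tendsto κ atTop (𝓝 (0:ℝ))) :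
    (fun n => (Emom p f (κ n) 2 - (Emom p f (κ n) 1) ^ 2)
        - 2 * κ n ^ 2 * ((p:ℝ) - 1) / ((p:ℝ) ^ 2 * ((p:ℝ) + 2)))
      =o[atTop] (fun n => κ n ^ 2) := by
  obtain ⟨δ, hδ, C, hC, hquad⟩ := log_quad_bound f hf_pos hf_diff hf_diff2 hf0 hf'0
  set K : ℝ := 2*C*(C*δ+2) with hK
  have hKpos : 0 < K := by positivity
  rw [Asymptotics.isLittleO_iff]
  intro ε hε
  have hr : (0:ℝ) < min δ (ε/K) := lt_min hδ (by positivity)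
  have hmem : Set.Ioo (-(min δ (ε/K))) (min δ (ε/K)) ∈ 𝓝 (0:ℝ) :=
    Ioo_mem_nhds (by linarith) hr
  filter_upwards [hκ.eventually hmem] with n hn
  have hlt : |κ n| < min δ (ε/K) := abs_lt.mpr ⟨by linarith [hn.1], hn.2⟩
  have h1 : |κ n| ≤ δ := (hlt.trans_le (min_le_left _ _)).le
  have h2 : |κ n| ≤ ε/K := (hlt.trans_le (min_le_right _ _)).le
  have hkey := key_estimate p hp f hf_pos hf_mono δ C hδ hC hquad (κ n) h1
  rw [Real.norm_eq_abs, Real.norm_eq_abs]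
  calc |(Emom p f (κ n) 2 - (Emom p f (κ n) 1) ^ 2)
        - 2 * κ n ^ 2 * ((p:ℝ) - 1) / ((p:ℝ) ^ 2 * ((p:ℝ) + 2))|
      ≤ K * |κ n|^3 := hkey
    _ = (K * |κ n|) * |κ n|^2 := by ring
    _ ≤ ε * |κ n|^2 := by
        apply mul_le_mul_of_nonneg_right _ (sq_nonneg _)
        rw [← le_div_iff₀' hKpos]
        exact h2
    _ = ε * |κ n ^ 2| := by rw [abs_pow]


end
end
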